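/- arXiv:1411.2130 — 5 statements merged into one kernel-verified Lean document; each statement's English description precedes it below -/
import Mathlib

section
/- The function U_ω(x) = √2 μ (√(1+ω) cosh(μx) − i√(1−ω) sinh(μx)) / (ω + cosh(2μx)), with μ = √(1−ω²) and ω ∈ (−1,1), satisfies the first-order ODE i U' − ω U + conj(U) = |U|² U. -/
open MeasureTheory

lemma frac_aux (A Bn C U V w d : ℂ) (hd : d ≠ 0)
    (h : (Complex.I*A + (C - w*Bn)*d)*d = U*V*U) :
    Complex.I * (A/d^2) - w * (Bn/d) + C/d = U/d * (V/d) * (U/d) := by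
  field_simp
  linear_combination h

noncomputable def thirringSoliton (ω x : ℝ) : ℂ :=
  (↑(Real.sqrt 2 * Real.sqrt (1 - ω ^ 2)) : ℂ) *
    ((↑(Real.sqrt (1 + ω) * Real.cosh (Real.sqrt (1 - ω ^ 2) * x)) : ℂ)
      - Complex.I * (↑(Real.sqrt (1 - ω) * Real.sinh (Real.sqrt (1 - ω ^ 2) * x)) : ℂ)) /
    (↑(ω + Real.cosh (2 * Real.sqrt (1 - ω ^ 2) * x)) : ℂ)

set_option maxHeartbeats 1600000 in
set_option maxRecDepth 8000 in
/-- The massive Thirring soliton satisfies `i U' − ω U + conj U = |U|² U`. -/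
theorem thirringSoliton_ode (ω : ℝ) (hω : ω ∈ Set.Ioo (-1 : ℝ) 1) (x : ℝ) :
    Complex.I * deriv (thirringSoliton ω) x - (ω : ℂ) * thirringSoliton ω x
      + (starRingEnd ℂ) (thirringSoliton ω x)
      = (↑‖thirringSoliton ω x‖ : ℂ) ^ 2 * thirringSoliton ω x := by
  obtain ⟨hω1, hω2⟩ := hω
  have h1 : (0:ℝ) ≤ 1 + ω := by linarith
  have h2 : (0:ℝ) ≤ 1 - ω := by linarith
  have h3 : (0:ℝ) ≤ 1 - ω^2 := by nlinarith
  have hlin : HasDerivAt (fun y : ℝ => Real.sqrt (1-ω^2) * y) (Real.sqrt (1-ω^2)) x := by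
    simpa using (hasDerivAt_id x).const_mul (Real.sqrt (1-ω^2))
  have hlin2 : HasDerivAt (fun y : ℝ => 2 * Real.sqrt (1-ω^2) * y) (2 * Real.sqrt (1-ω^2)) x := by
    simpa using (hasDerivAt_id x).const_mul (2 * Real.sqrt (1-ω^2))
  have hc' : HasDerivAt (fun y => Real.cosh (Real.sqrt (1-ω^2) * y))
      (Real.sinh (Real.sqrt (1-ω^2)*x) * Real.sqrt (1-ω^2)) x :=
    (Real.hasDerivAt_cosh _).comp x hlin
  have hs' : HasDerivAt (fun y => Real.sinh (Real.sqrt (1-ω^2) * y))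
      (Real.cosh (Real.sqrt (1-ω^2)*x) * Real.sqrt (1-ω^2)) x :=
    (Real.hasDerivAt_sinh _).comp x hlin
  have hA : HasDerivAt (fun y => (↑(Real.sqrt (1+ω) * Real.cosh (Real.sqrt (1-ω^2)*y)) : ℂ))
      (↑(Real.sqrt (1+ω) * (Real.sinh (Real.sqrt (1-ω^2)*x) * Real.sqrt (1-ω^2))) : ℂ) x :=
    (hc'.const_mul _).ofReal_comp
  have hB : HasDerivAt (fun y => Complex.I * (↑(Real.sqrt (1-ω) * Real.sinh (Real.sqrt (1-ω^2)*y)) : ℂ))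
      (Complex.I * ↑(Real.sqrt (1-ω) * (Real.cosh (Real.sqrt (1-ω^2)*x) * Real.sqrt (1-ω^2)))) x :=
    ((hs'.const_mul _).ofReal_comp).const_mul Complex.I
  have hc2 : HasDerivAt (fun y => Real.cosh (2*Real.sqrt (1-ω^2)*y))
      (Real.sinh (2*Real.sqrt (1-ω^2)*x) * (2*Real.sqrt (1-ω^2))) x :=
    (Real.hasDerivAt_cosh _).comp x hlin2
  have hden : HasDerivAt (fun y => ((ω + Real.cosh (2*Real.sqrt (1-ω^2)*y) : ℝ) : ℂ))
      (↑(Real.sinh (2*Real.sqrt (1-ω^2)*x) * (2*Real.sqrt (1-ω^2))) : ℂ) x :=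
    (hc2.const_add ω).ofReal_comp
  have hDpos : 0 < ω + Real.cosh (2*Real.sqrt (1-ω^2)*x) := by
    nlinarith [Real.one_le_cosh (2*Real.sqrt (1-ω^2)*x)]
  have hDne : ((ω + Real.cosh (2*Real.sqrt (1-ω^2)*x) : ℝ) : ℂ) ≠ 0 := by
    exact_mod_cast hDpos.ne'
  have hU : HasDerivAt (thirringSoliton ω)
      ((((↑(Real.sqrt 2 * Real.sqrt (1-ω^2)) : ℂ) *
          ((↑(Real.sqrt (1+ω) * (Real.sinh (Real.sqrt (1-ω^2)*x) * Real.sqrt (1-ω^2))) : ℂ)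
            - Complex.I * ↑(Real.sqrt (1-ω) * (Real.cosh (Real.sqrt (1-ω^2)*x) * Real.sqrt (1-ω^2))))) *
          (↑(ω + Real.cosh (2*Real.sqrt (1-ω^2)*x)) : ℂ)
        - ((↑(Real.sqrt 2 * Real.sqrt (1-ω^2)) : ℂ) *
          ((↑(Real.sqrt (1+ω) * Real.cosh (Real.sqrt (1-ω^2)*x)) : ℂ)
            - Complex.I * ↑(Real.sqrt (1-ω) * Real.sinh (Real.sqrt (1-ω^2)*x)))) *
          ↑(Real.sinh (2*Real.sqrt (1-ω^2)*x) * (2*Real.sqrt (1-ω^2)))) /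
        (↑(ω + Real.cosh (2*Real.sqrt (1-ω^2)*x)) : ℂ)^2) x := by
    exact ((hA.sub hB).const_mul _).div hden hDne
  rw [hU.deriv]
  have habs : ((‖thirringSoliton ω x‖ : ℝ) : ℂ)^2
      = thirringSoliton ω x * (starRingEnd ℂ) (thirringSoliton ω x) := by
    rw [Complex.mul_conj, ← Complex.ofReal_pow, Complex.sq_norm]
  rw [habs]
  simp only [thirringSoliton]
  have hch2 : Real.cosh (2*Real.sqrt (1-ω^2)*x)
      = Real.cosh (Real.sqrt (1-ω^2)*x)^2 + Real.sinh (Real.sqrt (1-ω^2)*x)^2 := by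
    rw [mul_assoc]; exact Real.cosh_two_mul _
  have hsh2 : Real.sinh (2*Real.sqrt (1-ω^2)*x)
      = 2 * Real.sinh (Real.sqrt (1-ω^2)*x) * Real.cosh (Real.sqrt (1-ω^2)*x) := by
    rw [mul_assoc]; exact Real.sinh_two_mul _
  rw [hch2] at hDne ⊢
  rw [hsh2]
  set a := Real.sqrt (1+ω) with ha_def
  set b := Real.sqrt (1-ω) with hb_def
  set K := Real.sqrt 2 with hK_def
  set m := Real.sqrt (1-ω^2) with hm_def
  set c := Real.cosh (m*x) with hc_def
  set s := Real.sinh (m*x) with hs_def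
  simp only [map_div₀, map_mul, map_sub, map_add, Complex.conj_ofReal, Complex.conj_I]
  push_cast
  push_cast at hDne
  have Hmr : m = a*b := by
    rw [hm_def, ha_def, hb_def, ← Real.sqrt_mul h1]
    congr 1; ring
  have Hm : (↑m:ℂ) = (↑a:ℂ) * (↑b:ℂ) := by exact_mod_cast Hmr
  have HI : Complex.I^2 = -1 := Complex.I_sq
  have HK : (↑K:ℂ)^2 = 2 := by
    have : K^2 = 2 := Real.sq_sqrt (by norm_num)
    exact_mod_cast this
  have Ha : (↑a:ℂ)^2 = 1 + (↑ω:ℂ) := by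
    have : a^2 = 1 + ω := Real.sq_sqrt h1
    exact_mod_cast this
  have Hb : (↑b:ℂ)^2 = 1 - (↑ω:ℂ) := by
    have : b^2 = 1 - ω := Real.sq_sqrt h2
    exact_mod_cast this
  have Hs : (↑s:ℂ)^2 = (↑c:ℂ)^2 - 1 := by
    have hcs := Real.cosh_sq_sub_sinh_sq (m*x)
    have : s^2 = c^2 - 1 := by rw [hs_def, hc_def]; linarith
    exact_mod_cast this
  refine frac_aux _ _ _ _ _ _ _ hDne ?_
  linear_combination
        ((-2) * (b:ℂ)*(s:ℂ)*(K:ℂ)*Complex.I + (2) * (b:ℂ)*(s:ℂ)*(ω:ℂ)^2*(K:ℂ)*Complex.I - (b:ℂ)*(s:ℂ)^3*(K:ℂ)*Complex.I + (b:ℂ)*(s:ℂ)^3*(ω:ℂ)*(K:ℂ)*Complex.I + (2) * (b:ℂ)*(s:ℂ)^3*(ω:ℂ)^2*(K:ℂ)*Complex.I + (b:ℂ)*(s:ℂ)^5*(K:ℂ)*Complex.I + (b:ℂ)*(s:ℂ)^5*(ω:ℂ)*(K:ℂ)*Complex.I + (2) * (b:ℂ)*(c:ℂ)*(m:ℂ)*(K:ℂ)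 + (-2) * (b:ℂ)*(c:ℂ)*(ω:ℂ)^2*(m:ℂ)*(K:ℂ) - (b:ℂ)*(c:ℂ)*(ω:ℂ)^2*(m:ℂ)*(K:ℂ)*Complex.I^2 + (2) * (b:ℂ)*(c:ℂ)*(s:ℂ)^2*(ω:ℂ)*(m:ℂ)*(K:ℂ)*Complex.I^2 + (3) * (b:ℂ)*(c:ℂ)*(s:ℂ)^4*(m:ℂ)*(K:ℂ)*Complex.I^2 + (6) * (b:ℂ)*(c:ℂ)^2*(s:ℂ)*(K:ℂ)*Complex.I + (4) * (b:ℂ)*(c:ℂ)^2*(s:ℂ)*(ω:ℂ)*(K:ℂ)*Complex.I + (-2) * (b:ℂ)*(c:ℂ)^2*(s:ℂ)*(ω:ℂ)^2*(K:ℂ)*Complex.I + (3) * (b:ℂ)*(c:ℂ)^2*(s:ℂ)^3*(K:ℂ)*Complex.I + (3) * (b:ℂ)*(c:ℂ)^2*(s:ℂ)^3*(ω:ℂ)*(K:ℂ)*Complex.I + (-2) * (b:ℂ)*(c:ℂ)^3*(m:ℂ)*(K:ℂ) + (-2) * (b:ℂ)*(c:ℂ)^3*(ω:ℂ)*(m:ℂ)*(K:ℂ)*Complex.I^2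 + (2) * (b:ℂ)*(c:ℂ)^3*(ω:ℂ)^2*(m:ℂ)*(K:ℂ) + (2) * (b:ℂ)*(c:ℂ)^3*(s:ℂ)^2*(m:ℂ)*(K:ℂ)*Complex.I^2 + (-4) * (b:ℂ)*(c:ℂ)^4*(s:ℂ)*(K:ℂ)*Complex.I + (-4) * (b:ℂ)*(c:ℂ)^4*(s:ℂ)*(ω:ℂ)*(K:ℂ)*Complex.I - (b:ℂ)*(c:ℂ)^5*(m:ℂ)*(K:ℂ)*Complex.I^2 - (b:ℂ)^3*(s:ℂ)^3*(m:ℂ)^2*(K:ℂ)^3*Complex.I^3 + (a:ℂ)*(s:ℂ)*(ω:ℂ)^2*(m:ℂ)*(K:ℂ)*Complex.I + (2) * (a:ℂ)*(s:ℂ)^3*(ω:ℂ)*(m:ℂ)*(K:ℂ)*Complex.I + (a:ℂ)*(s:ℂ)^5*(m:ℂ)*(K:ℂ)*Complex.I + (2) * (a:ℂ)*(c:ℂ)*(K:ℂ) + (-2) * (a:ℂ)*(c:ℂ)*(ω:ℂ)^2*(K:ℂ) + (3) * (a:ℂ)*(c:ℂ)*(s:ℂ)^2*(K:ℂ) - (a:ℂ)*(c:ℂ)*(s:ℂ)^2*(ω:ℂ)*(K:ℂ)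 + (-2) * (a:ℂ)*(c:ℂ)*(s:ℂ)^2*(ω:ℂ)^2*(K:ℂ) + (a:ℂ)*(c:ℂ)*(s:ℂ)^4*(K:ℂ) - (a:ℂ)*(c:ℂ)*(s:ℂ)^4*(ω:ℂ)*(K:ℂ) + (2) * (a:ℂ)*(c:ℂ)^2*(s:ℂ)*(m:ℂ)*(K:ℂ)*Complex.I + (-2) * (a:ℂ)*(c:ℂ)^2*(s:ℂ)*(ω:ℂ)*(m:ℂ)*(K:ℂ)*Complex.I + (-2) * (a:ℂ)*(c:ℂ)^2*(s:ℂ)*(ω:ℂ)^2*(m:ℂ)*(K:ℂ)*Complex.I + (-2) * (a:ℂ)*(c:ℂ)^2*(s:ℂ)^3*(m:ℂ)*(K:ℂ)*Complex.I + (-2) * (a:ℂ)*(c:ℂ)^3*(K:ℂ) + (2) * (a:ℂ)*(c:ℂ)^3*(ω:ℂ)^2*(K:ℂ) - (a:ℂ)*(c:ℂ)^3*(s:ℂ)^2*(K:ℂ) + (a:ℂ)*(c:ℂ)^3*(s:ℂ)^2*(ω:ℂ)*(K:ℂ) + (-3) * (a:ℂ)*(c:ℂ)^4*(s:ℂ)*(m:ℂ)*(K:ℂ)*Complex.I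 + (-2) * (a:ℂ)*(b:ℂ)^2*(s:ℂ)*(m:ℂ)*(K:ℂ)*Complex.I + (2) * (a:ℂ)*(b:ℂ)^2*(s:ℂ)*(ω:ℂ)*(m:ℂ)*(K:ℂ)*Complex.I + (a:ℂ)*(b:ℂ)^2*(c:ℂ)*(s:ℂ)^2*(m:ℂ)^2*(K:ℂ)^3*Complex.I^2 + (2) * (a:ℂ)*(b:ℂ)^2*(c:ℂ)^2*(s:ℂ)*(m:ℂ)*(K:ℂ)*Complex.I + (-2) * (a:ℂ)*(b:ℂ)^2*(c:ℂ)^2*(s:ℂ)*(ω:ℂ)*(m:ℂ)*(K:ℂ)*Complex.I + (a:ℂ)^2*(b:ℂ)*(c:ℂ)^2*(s:ℂ)*(m:ℂ)^2*(K:ℂ)^3*Complex.I + (-2) * (a:ℂ)^2*(b:ℂ)*(c:ℂ)^3*(m:ℂ)*(K:ℂ) + (-2) * (a:ℂ)^2*(b:ℂ)*(c:ℂ)^3*(ω:ℂ)*(m:ℂ)*(K:ℂ) - (a:ℂ)^3*(c:ℂ)^3*(m:ℂ)^2*(K:ℂ)^3) * Hm +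
        (-(a:ℂ)*(b:ℂ)^2*(c:ℂ)*(ω:ℂ)^2*(m:ℂ)*(K:ℂ) + (2) * (a:ℂ)*(b:ℂ)^2*(c:ℂ)*(s:ℂ)^2*(ω:ℂ)*(m:ℂ)*(K:ℂ) + (3) * (a:ℂ)*(b:ℂ)^2*(c:ℂ)*(s:ℂ)^4*(m:ℂ)*(K:ℂ) + (-2) * (a:ℂ)*(b:ℂ)^2*(c:ℂ)^3*(ω:ℂ)*(m:ℂ)*(K:ℂ) + (2) * (a:ℂ)*(b:ℂ)^2*(c:ℂ)^3*(s:ℂ)^2*(m:ℂ)*(K:ℂ) - (a:ℂ)*(b:ℂ)^2*(c:ℂ)^5*(m:ℂ)*(K:ℂ) - (a:ℂ)*(b:ℂ)^4*(s:ℂ)^3*(m:ℂ)^2*(K:ℂ)^3*Complex.I + (a:ℂ)^2*(b:ℂ)^3*(c:ℂ)*(s:ℂ)^2*(m:ℂ)^2*(K:ℂ)^3) * HI +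
        ((a:ℂ)*(b:ℂ)^4*(s:ℂ)^3*(m:ℂ)^2*(K:ℂ)*Complex.I - (a:ℂ)^2*(b:ℂ)^3*(c:ℂ)*(s:ℂ)^2*(m:ℂ)^2*(K:ℂ) + (a:ℂ)^3*(b:ℂ)^2*(c:ℂ)^2*(s:ℂ)*(m:ℂ)^2*(K:ℂ)*Complex.I - (a:ℂ)^4*(b:ℂ)*(c:ℂ)^3*(m:ℂ)^2*(K:ℂ)) * HK +
        ((b:ℂ)*(s:ℂ)*(ω:ℂ)^2*(m:ℂ)*(K:ℂ)*Complex.I + (2) * (b:ℂ)*(s:ℂ)^3*(ω:ℂ)*(m:ℂ)*(K:ℂ)*Complex.I + (b:ℂ)*(s:ℂ)^5*(m:ℂ)*(K:ℂ)*Complex.I + (2) * (b:ℂ)*(c:ℂ)*(K:ℂ) + (-2) * (b:ℂ)*(c:ℂ)*(ω:ℂ)^2*(K:ℂ) + (3) * (b:ℂ)*(c:ℂ)*(s:ℂ)^2*(K:ℂ) - (b:ℂ)*(c:ℂ)*(s:ℂ)^2*(ω:ℂ)*(K:ℂ) + (-2) * (b:ℂ)*(c:ℂ)*(s:ℂ)^2*(ω:ℂ)^2*(K:ℂ)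 + (b:ℂ)*(c:ℂ)*(s:ℂ)^4*(K:ℂ) - (b:ℂ)*(c:ℂ)*(s:ℂ)^4*(ω:ℂ)*(K:ℂ) + (2) * (b:ℂ)*(c:ℂ)^2*(s:ℂ)*(m:ℂ)*(K:ℂ)*Complex.I + (-2) * (b:ℂ)*(c:ℂ)^2*(s:ℂ)*(ω:ℂ)*(m:ℂ)*(K:ℂ)*Complex.I + (-2) * (b:ℂ)*(c:ℂ)^2*(s:ℂ)*(ω:ℂ)^2*(m:ℂ)*(K:ℂ)*Complex.I + (-2) * (b:ℂ)*(c:ℂ)^2*(s:ℂ)^3*(m:ℂ)*(K:ℂ)*Complex.I + (-2) * (b:ℂ)*(c:ℂ)^3*(K:ℂ) + (2) * (b:ℂ)*(c:ℂ)^3*(ω:ℂ)^2*(K:ℂ) - (b:ℂ)*(c:ℂ)^3*(s:ℂ)^2*(K:ℂ) + (b:ℂ)*(c:ℂ)^3*(s:ℂ)^2*(ω:ℂ)*(K:ℂ) + (-3) * (b:ℂ)*(c:ℂ)^4*(s:ℂ)*(m:ℂ)*(K:ℂ)*Complex.I + (-2) * (b:ℂ)^3*(s:ℂ)*(m:ℂ)*(K:ℂ)*Complex.I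 + (2) * (b:ℂ)^3*(s:ℂ)*(ω:ℂ)*(m:ℂ)*(K:ℂ)*Complex.I + (-2) * (b:ℂ)^3*(c:ℂ)*(s:ℂ)^2*(m:ℂ)^2*(K:ℂ) + (2) * (b:ℂ)^3*(c:ℂ)^2*(s:ℂ)*(m:ℂ)*(K:ℂ)*Complex.I + (-2) * (b:ℂ)^3*(c:ℂ)^2*(s:ℂ)*(ω:ℂ)*(m:ℂ)*(K:ℂ)*Complex.I + (2) * (a:ℂ)*(b:ℂ)^2*(c:ℂ)^2*(s:ℂ)*(m:ℂ)^2*(K:ℂ)*Complex.I + (-2) * (a:ℂ)*(b:ℂ)^2*(c:ℂ)^3*(m:ℂ)*(K:ℂ) + (-2) * (a:ℂ)*(b:ℂ)^2*(c:ℂ)^3*(ω:ℂ)*(m:ℂ)*(K:ℂ) + (-2) * (a:ℂ)^2*(b:ℂ)*(c:ℂ)^3*(m:ℂ)^2*(K:ℂ)) * Ha +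
        ((-2) * (b:ℂ)*(s:ℂ)*(m:ℂ)*(K:ℂ)*Complex.I + (2) * (b:ℂ)*(s:ℂ)*(ω:ℂ)^2*(m:ℂ)*(K:ℂ)*Complex.I + (-2) * (b:ℂ)*(c:ℂ)*(s:ℂ)^2*(m:ℂ)^2*(K:ℂ) + (-2) * (b:ℂ)*(c:ℂ)*(s:ℂ)^2*(ω:ℂ)*(m:ℂ)^2*(K:ℂ) + (2) * (b:ℂ)*(c:ℂ)^2*(s:ℂ)*(m:ℂ)*(K:ℂ)*Complex.I + (-2) * (b:ℂ)*(c:ℂ)^2*(s:ℂ)*(ω:ℂ)^2*(m:ℂ)*(K:ℂ)*Complex.I + (-2) * (a:ℂ)*(s:ℂ)*(K:ℂ)*Complex.I + (2) * (a:ℂ)*(s:ℂ)*(ω:ℂ)^2*(K:ℂ)*Complex.I - (a:ℂ)*(s:ℂ)^3*(K:ℂ)*Complex.I + (a:ℂ)*(s:ℂ)^3*(ω:ℂ)*(K:ℂ)*Complex.I + (2) * (a:ℂ)*(s:ℂ)^3*(ω:ℂ)^2*(K:ℂ)*Complex.I + (a:ℂ)*(s:ℂ)^5*(K:ℂ)*Complex.I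 + (a:ℂ)*(s:ℂ)^5*(ω:ℂ)*(K:ℂ)*Complex.I + (2) * (a:ℂ)*(c:ℂ)*(m:ℂ)*(K:ℂ) - (a:ℂ)*(c:ℂ)*(ω:ℂ)^2*(m:ℂ)*(K:ℂ) + (-2) * (a:ℂ)*(c:ℂ)*(s:ℂ)^2*(ω:ℂ)*(m:ℂ)*(K:ℂ) + (-3) * (a:ℂ)*(c:ℂ)*(s:ℂ)^4*(m:ℂ)*(K:ℂ) + (6) * (a:ℂ)*(c:ℂ)^2*(s:ℂ)*(K:ℂ)*Complex.I + (2) * (a:ℂ)*(c:ℂ)^2*(s:ℂ)*(m:ℂ)^2*(K:ℂ)*Complex.I + (4) * (a:ℂ)*(c:ℂ)^2*(s:ℂ)*(ω:ℂ)*(K:ℂ)*Complex.I + (2) * (a:ℂ)*(c:ℂ)^2*(s:ℂ)*(ω:ℂ)*(m:ℂ)^2*(K:ℂ)*Complex.I + (-2) * (a:ℂ)*(c:ℂ)^2*(s:ℂ)*(ω:ℂ)^2*(K:ℂ)*Complex.I + (3) * (a:ℂ)*(c:ℂ)^2*(s:ℂ)^3*(K:ℂ)*Complex.I + (3) * (a:ℂ)*(c:ℂ)^2*(s:ℂ)^3*(ω:ℂ)*(K:ℂ)*Complex.I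 + (-4) * (a:ℂ)*(c:ℂ)^3*(m:ℂ)*(K:ℂ) + (-2) * (a:ℂ)*(c:ℂ)^3*(ω:ℂ)*(m:ℂ)*(K:ℂ) + (-2) * (a:ℂ)*(c:ℂ)^3*(s:ℂ)^2*(m:ℂ)*(K:ℂ) + (-4) * (a:ℂ)*(c:ℂ)^4*(s:ℂ)*(K:ℂ)*Complex.I + (-4) * (a:ℂ)*(c:ℂ)^4*(s:ℂ)*(ω:ℂ)*(K:ℂ)*Complex.I + (a:ℂ)*(c:ℂ)^5*(m:ℂ)*(K:ℂ) + (2) * (a:ℂ)*(b:ℂ)^2*(s:ℂ)^3*(m:ℂ)^2*(K:ℂ)*Complex.I) * Hb +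
        ((2) * (b:ℂ)*(s:ℂ)*(ω:ℂ)*(m:ℂ)*(K:ℂ)*Complex.I + (2) * (b:ℂ)*(s:ℂ)*(ω:ℂ)^2*(m:ℂ)*(K:ℂ)*Complex.I + (b:ℂ)*(s:ℂ)^3*(m:ℂ)*(K:ℂ)*Complex.I + (b:ℂ)*(s:ℂ)^3*(ω:ℂ)*(m:ℂ)*(K:ℂ)*Complex.I + (2) * (b:ℂ)*(c:ℂ)*(K:ℂ) + (-2) * (b:ℂ)*(c:ℂ)*(m:ℂ)^2*(K:ℂ) + (2) * (b:ℂ)*(c:ℂ)*(ω:ℂ)*(K:ℂ) + (-2) * (b:ℂ)*(c:ℂ)*(ω:ℂ)^2*(K:ℂ) + (2) * (b:ℂ)*(c:ℂ)*(ω:ℂ)^2*(m:ℂ)^2*(K:ℂ) + (-2) * (b:ℂ)*(c:ℂ)*(ω:ℂ)^3*(K:ℂ) + (b:ℂ)*(c:ℂ)*(s:ℂ)^2*(K:ℂ) - (b:ℂ)*(c:ℂ)*(s:ℂ)^2*(ω:ℂ)^2*(K:ℂ) + (-2) * (b:ℂ)*(c:ℂ)^2*(s:ℂ)*(m:ℂ)*(K:ℂ)*Complex.I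 + (-2) * (b:ℂ)*(c:ℂ)^2*(s:ℂ)*(ω:ℂ)*(m:ℂ)*(K:ℂ)*Complex.I + (-2) * (a:ℂ)*(s:ℂ)*(K:ℂ)*Complex.I + (2) * (a:ℂ)*(s:ℂ)*(ω:ℂ)*(K:ℂ)*Complex.I + (2) * (a:ℂ)*(s:ℂ)*(ω:ℂ)^2*(K:ℂ)*Complex.I + (-2) * (a:ℂ)*(s:ℂ)*(ω:ℂ)^3*(K:ℂ)*Complex.I + (a:ℂ)*(s:ℂ)^3*(K:ℂ)*Complex.I - (a:ℂ)*(s:ℂ)^3*(ω:ℂ)^2*(K:ℂ)*Complex.I + (-2) * (a:ℂ)*(c:ℂ)*(ω:ℂ)*(m:ℂ)*(K:ℂ) + (2) * (a:ℂ)*(c:ℂ)*(ω:ℂ)^2*(m:ℂ)*(K:ℂ) + (-3) * (a:ℂ)*(c:ℂ)*(s:ℂ)^2*(m:ℂ)*(K:ℂ) + (3) * (a:ℂ)*(c:ℂ)*(s:ℂ)^2*(ω:ℂ)*(m:ℂ)*(K:ℂ) + (4) * (a:ℂ)*(c:ℂ)^2*(s:ℂ)*(K:ℂ)*Complex.I +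 (-4) * (a:ℂ)*(c:ℂ)^2*(s:ℂ)*(ω:ℂ)^2*(K:ℂ)*Complex.I + (-2) * (a:ℂ)*(c:ℂ)^3*(m:ℂ)*(K:ℂ) + (2) * (a:ℂ)*(c:ℂ)^3*(ω:ℂ)*(m:ℂ)*(K:ℂ) + (2) * (a:ℂ)*(b:ℂ)^2*(s:ℂ)*(m:ℂ)^2*(K:ℂ)*Complex.I + (-2) * (a:ℂ)*(b:ℂ)^2*(s:ℂ)*(ω:ℂ)*(m:ℂ)^2*(K:ℂ)*Complex.I) * Hs
end

section
/- For the massive Thirring soliton U_ω with ω ∈ (−1,1), the L² norm satisfies ∫_ℝ |U_ω(x)|² dx = 4 arctan(√((1−ω)/(1+ω))). -/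
open MeasureTheory Real Filter Set

lemma tanh_lim : Filter.Tendsto (fun x : ℝ => Real.sinh x / Real.cosh x) atTop (nhds 1) := by
  have key : ∀ x : ℝ, Real.sinh x / Real.cosh x = 1 - 2 / (Real.exp (2*x) + 1) := by
    intro x
    have h3 : Real.exp x ≠ 0 := (Real.exp_pos x).ne'
    have h2 : Real.cosh x ≠ 0 := (Real.cosh_pos x).ne'
    have h1 : Real.exp (2*x) + 1 ≠ 0 := by positivity
    rw [Real.sinh_eq, Real.cosh_eq, Real.exp_neg] at *
    rw [two_mul, Real.exp_add] at *
    field_simp at *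
    ring
  have h0 : Tendsto (fun x : ℝ => 2 / (Real.exp (2*x) + 1)) atTop (nhds 0) :=
    tendsto_const_nhds.div_atTop
      ((Real.tendsto_exp_atTop.comp (tendsto_id.const_mul_atTop two_pos)).atTop_add
        tendsto_const_nhds)
  have h1 : Tendsto (fun x : ℝ => 1 - 2 / (Real.exp (2*x) + 1)) atTop (nhds (1 - 0)) :=
    tendsto_const_nhds.sub h0
  rw [sub_zero] at h1
  exact h1.congr fun x => (key x).symm

set_option maxHeartbeats 1000000 in
/-- L² norm of the massive Thirring soliton: ∫ |U_ω|² = 4 arctan √((1−ω)/(1+ω)). -/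
theorem thirringSoliton_L2 (ω : ℝ) (hω : ω ∈ Set.Ioo (-1 : ℝ) 1) :
    ∫ x : ℝ, ‖thirringSoliton ω x‖ ^ 2
      = 4 * Real.arctan (Real.sqrt ((1 - ω) / (1 + ω))) := by
  obtain ⟨hω1, hω2⟩ := hω
  have h1p : (0:ℝ) < 1 + ω := by linarith
  have h1m : (0:ℝ) < 1 - ω := by linarith
  have hsq : (0:ℝ) < 1 - ω^2 := by nlinarith
  set μ : ℝ := Real.sqrt (1 - ω ^ 2) with hμdef
  have hμ : 0 < μ := Real.sqrt_pos.2 hsq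
  have hμ2 : μ ^ 2 = 1 - ω ^ 2 := Real.sq_sqrt hsq.le
  set a : ℝ := Real.sqrt ((1 - ω) / (1 + ω)) with hadef
  have ha2 : a ^ 2 = (1 - ω) / (1 + ω) := Real.sq_sqrt (by positivity)
  have haμ : a * μ = 1 - ω := by
    rw [hadef, hμdef, ← Real.sqrt_mul (by positivity)]
    rw [show (1 - ω) / (1 + ω) * (1 - ω^2) = (1-ω)^2 by field_simp; ring]
    exact Real.sqrt_sq h1m.le
  -- the squared modulus as a function of |x|
  set h : ℝ → ℝ := fun x => 2 * (1 - ω^2) / (ω + Real.cosh (2 * μ * x)) with hhdef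
  have hden : ∀ x : ℝ, 0 < ω + Real.cosh (2 * μ * x) := by
    intro x
    have := Real.one_le_cosh (2 * μ * x)
    linarith
  have habs : ∀ x : ℝ, ‖thirringSoliton ω x‖ ^ 2 = h |x| := by
    intro x
    have hcx : Real.cosh (2 * μ * |x|) = Real.cosh (2 * μ * x) := by
      rcases abs_choice x with h | h <;> rw [h]
      rw [mul_neg, Real.cosh_neg]
    have hd := hden x
    rw [hhdef]
    simp only [hcx]
    rw [thirringSoliton, Complex.sq_norm, Complex.normSq_div, Complex.normSq_mul]
    simp only [Complex.normSq_ofReal]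
    have e1 : Real.sqrt (1+ω) ^ 2 = 1+ω := Real.sq_sqrt h1p.le
    have e2 : Real.sqrt (1-ω) ^ 2 = 1-ω := Real.sq_sqrt h1m.le
    have hnum : Complex.normSq ((↑(Real.sqrt (1 + ω) * Real.cosh (μ * x)) : ℂ)
        - Complex.I * (↑(Real.sqrt (1 - ω) * Real.sinh (μ * x)) : ℂ))
        = (1 + ω) * Real.cosh (μ * x)^2 + (1 - ω) * Real.sinh (μ * x)^2 := by
      simp only [Complex.normSq_apply, Complex.sub_re, Complex.sub_im, Complex.mul_re,
        Complex.mul_im, Complex.I_re, Complex.I_im, Complex.ofReal_re, Complex.ofReal_im]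
      ring_nf
      linear_combination Real.cosh (μ*x)^2 * e1 + Real.sinh (μ*x)^2 * e2
    rw [hnum]
    have hch : (1 + ω) * Real.cosh (μ * x)^2 + (1 - ω) * Real.sinh (μ * x)^2
        = ω + Real.cosh (2 * μ * x) := by
      have h1 := Real.sinh_sq (μ * x)
      have h2 := Real.cosh_two_mul (μ * x)
      rw [show 2 * μ * x = 2 * (μ * x) by ring, h2]
      nlinarith
    rw [hch, ← hμdef]
    have e0 : Real.sqrt 2 * μ * (Real.sqrt 2 * μ) = 2 * (1 - ω^2) := by
      have h2 : Real.sqrt 2 * Real.sqrt 2 = 2 := Real.mul_self_sqrt (by norm_num)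
      nlinarith [hμ2]
    rw [e0]
    field_simp
  -- main computation
  have hint : ∫ x : ℝ, ‖thirringSoliton ω x‖ ^ 2 = ∫ x : ℝ, h |x| :=
    integral_congr_ae (Filter.Eventually.of_forall habs)
  rw [hint, integral_comp_abs]
  set G : ℝ → ℝ := fun x => 2 * Real.arctan (a * (Real.sinh (μ*x) / Real.cosh (μ*x))) with hGdef
  have hderiv : ∀ x : ℝ, HasDerivAt G (h x) x := by
    intro x
    have hc := Real.cosh_pos (μ*x)
    have hlin : HasDerivAt (fun y : ℝ => μ * y) μ x := by
      simpa using (hasDerivAt_id x).const_mul μ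
    have hsnh : HasDerivAt (fun y => Real.sinh (μ*y)) (Real.cosh (μ*x) * μ) x :=
      (Real.hasDerivAt_sinh (μ*x)).comp x hlin
    have hcsh : HasDerivAt (fun y => Real.cosh (μ*y)) (Real.sinh (μ*x) * μ) x :=
      (Real.hasDerivAt_cosh (μ*x)).comp x hlin
    have ht := hsnh.div hcsh hc.ne'
    have harc := ((Real.hasDerivAt_arctan (a * (Real.sinh (μ*x)/Real.cosh (μ*x)))).comp x
      (ht.const_mul a)).const_mul 2
    convert harc using 1
    case e'_4 => rfl
    case e'_5 => rfl
    case e'_8 => rfl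
    have hc' : Real.cosh (μ*x) ≠ 0 := hc.ne'
    have hd' : ω + Real.cosh (2*μ*x) ≠ 0 := (hden x).ne'
    have h1' : (1:ℝ) + (a * (Real.sinh (μ*x)/Real.cosh (μ*x)))^2 ≠ 0 := by positivity
    have hs2 : Real.sinh (μ*x)^2 = Real.cosh (μ*x)^2 - 1 := Real.sinh_sq (μ*x)
    have hcos2 : Real.cosh (2*μ*x) = 2 * Real.cosh (μ*x)^2 - 1 := by
      rw [show 2*μ*x = 2*(μ*x) by ring, Real.cosh_two_mul]; linarith
    have ha2' : a^2 * (1+ω) = 1 - ω := by rw [ha2]; field_simp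
    have hA : Real.cosh (μ*x) * μ * Real.cosh (μ*x) - Real.sinh (μ*x) * (Real.sinh (μ*x) * μ)
        = μ := by nlinarith [hs2]
    have hB : (1:ℝ) + (a * (Real.sinh (μ*x)/Real.cosh (μ*x)))^2
        = (ω + Real.cosh (2*μ*x))/((1+ω)*Real.cosh (μ*x)^2) := by
      rw [hcos2]
      field_simp
      linear_combination Real.sinh (μ*x)^2 * ha2' + (1-ω) * hs2
    rw [hhdef]
    simp only
    rw [hA, hB]
    rw [hcos2] at hd' ⊢
    field_simp
    linear_combination (-(1+ω)) * haμ
  have hpos : ∀ x ∈ Set.Ioi (0:ℝ), 0 ≤ h x := by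
    intro x _
    have := hden x
    rw [hhdef]
    positivity
  have htop : Tendsto G atTop (nhds (2 * Real.arctan a)) := by
    have hμx : Tendsto (fun x : ℝ => μ * x) atTop atTop := tendsto_id.const_mul_atTop hμ
    have h1 : Tendsto (fun x : ℝ => Real.sinh (μ*x)/Real.cosh (μ*x)) atTop (nhds 1) :=
      tanh_lim.comp hμx
    have h2 : Tendsto (fun x : ℝ => a * (Real.sinh (μ*x)/Real.cosh (μ*x))) atTop
        (nhds (a * 1)) := h1.const_mul a
    have h3 := ((Real.continuous_arctan.tendsto (a*1)).comp h2).const_mul 2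
    simpa [hGdef, Function.comp] using h3
  have hIoi : ∫ x in Set.Ioi (0:ℝ), h x = 2 * Real.arctan a - G 0 :=
    integral_Ioi_of_hasDerivAt_of_nonneg' (fun x _ => hderiv x) hpos htop
  have hG0 : G 0 = 0 := by simp [hGdef]
  rw [hIoi, hG0]
  ring
end

section
/- For the massive Thirring soliton U_ω with ω ∈ (−1,1), the squared L² norm of its derivative satisfies ∫_ℝ |U_ω'(x)|² dx = −4ω√(1−ω²) + 4(1+ω²) arctan(√((1−ω)/(1+ω))). -/
open MeasureTheory

section ThirringAux
open Real Filter

noncomputable def tsV (ω x : ℝ) : ℂ :=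
  ((↑(Real.sqrt 2 * Real.sqrt (1-ω^2)) : ℂ) *
     ((↑(Real.sqrt (1+ω) * (Real.sinh (Real.sqrt (1-ω^2)*x) * Real.sqrt (1-ω^2))) : ℂ) -
      Complex.I * (↑(Real.sqrt (1-ω) * (Real.cosh (Real.sqrt (1-ω^2)*x) * Real.sqrt (1-ω^2))) : ℂ)) *
     (↑(ω + Real.cosh (2*Real.sqrt (1-ω^2)*x)) : ℂ) -
    (↑(Real.sqrt 2 * Real.sqrt (1-ω^2)) : ℂ) *
     ((↑(Real.sqrt (1+ω) * Real.cosh (Real.sqrt (1-ω^2)*x)) : ℂ) -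
      Complex.I * (↑(Real.sqrt (1-ω) * Real.sinh (Real.sqrt (1-ω^2)*x)) : ℂ)) *
     (↑(Real.sinh (2*Real.sqrt (1-ω^2)*x) * (2*Real.sqrt (1-ω^2))) : ℂ)) /
   ((↑(ω + Real.cosh (2*Real.sqrt (1-ω^2)*x)) : ℂ))^2

lemma ts_den_pos (ω : ℝ) (h1 : -1 < ω) (x : ℝ) : 0 < ω + Real.cosh (2*Real.sqrt (1-ω^2)*x) := by
  have := Real.one_le_cosh (2*Real.sqrt (1-ω^2)*x)
  linarith

lemma ts_hasDerivAt (ω : ℝ) (h1 : -1 < ω) (x : ℝ) :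
    HasDerivAt (thirringSoliton ω) (tsV ω x) x := by
  have hμx : HasDerivAt (fun y : ℝ => Real.sqrt (1-ω^2) * y) (Real.sqrt (1-ω^2)) x := by
    simpa using (hasDerivAt_id x).const_mul (Real.sqrt (1-ω^2))
  have h2μx : HasDerivAt (fun y : ℝ => 2*Real.sqrt (1-ω^2) * y) (2*Real.sqrt (1-ω^2)) x := by
    simpa using (hasDerivAt_id x).const_mul (2*Real.sqrt (1-ω^2))
  have hp : HasDerivAt (fun y : ℝ => Real.sqrt (1+ω) * Real.cosh (Real.sqrt (1-ω^2)*y))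
      (Real.sqrt (1+ω) * (Real.sinh (Real.sqrt (1-ω^2)*x) * Real.sqrt (1-ω^2))) x :=
    ((Real.hasDerivAt_cosh _).comp x hμx).const_mul _
  have hq : HasDerivAt (fun y : ℝ => Real.sqrt (1-ω) * Real.sinh (Real.sqrt (1-ω^2)*y))
      (Real.sqrt (1-ω) * (Real.cosh (Real.sqrt (1-ω^2)*x) * Real.sqrt (1-ω^2))) x :=
    ((Real.hasDerivAt_sinh _).comp x hμx).const_mul _
  have hd : HasDerivAt (fun y : ℝ => ω + Real.cosh (2*Real.sqrt (1-ω^2)*y))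
      (Real.sinh (2*Real.sqrt (1-ω^2)*x) * (2*Real.sqrt (1-ω^2))) x :=
    (((Real.hasDerivAt_cosh _).comp x h2μx)).const_add ω
  have hnum := ((hp.ofReal_comp).sub ((hq.ofReal_comp).const_mul Complex.I)).const_mul
      ((↑(Real.sqrt 2 * Real.sqrt (1-ω^2)) : ℂ))
  have hne : ((↑(ω + Real.cosh (2*Real.sqrt (1-ω^2)*x)) : ℂ)) ≠ 0 :=
    Complex.ofReal_ne_zero.mpr (ts_den_pos ω h1 x).ne'
  have := hnum.div (hd.ofReal_comp) hne
  exact this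

noncomputable def tsf (ω : ℝ) : ℝ → ℝ := fun x =>
  2*(1-ω^2)^2 * ((1+ω)*(Real.sinh (Real.sqrt (1-ω^2)*x))^2*(3-ω+2*(Real.sinh (Real.sqrt (1-ω^2)*x))^2)^2
    + (1-ω)*(1+(Real.sinh (Real.sqrt (1-ω^2)*x))^2)*(1+ω-2*(Real.sinh (Real.sqrt (1-ω^2)*x))^2)^2)
  / (1+ω+2*(Real.sinh (Real.sqrt (1-ω^2)*x))^2)^4

lemma ts_abs (ω : ℝ) (h1 : -1 < ω) (h2 : ω < 1) (x : ℝ) :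
    ‖tsV ω x‖^2 = tsf ω x := by
  have hd := ts_den_pos ω h1 x
  unfold tsV tsf
  set μ := Real.sqrt (1-ω^2) with hμdef
  set S := Real.sinh (μ*x) with hSdef
  set C := Real.cosh (μ*x) with hCdef
  have harg : Real.cosh (2*μ*x) = C^2+S^2 := by rw [mul_assoc]; exact Real.cosh_two_mul _
  have harg2 : Real.sinh (2*μ*x) = 2*S*C := by rw [mul_assoc]; exact Real.sinh_two_mul _
  rw [harg] at hd ⊢
  rw [harg2]
  have hμ2 : μ^2 = 1-ω^2 := Real.sq_sqrt (by nlinarith)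
  have ha2 : Real.sqrt (1+ω)^2 = 1+ω := Real.sq_sqrt (by linarith)
  have hb2 : Real.sqrt (1-ω)^2 = 1-ω := Real.sq_sqrt (by linarith)
  have hC2 : C^2 = S^2+1 := Real.cosh_sq _
  have hz : ((↑(Real.sqrt 2*μ):ℂ) *
     ((↑(Real.sqrt (1+ω) * (S * μ)) : ℂ) - Complex.I * (↑(Real.sqrt (1-ω) * (C * μ)) : ℂ)) *
     (↑(ω + (C^2+S^2)) : ℂ) -
    (↑(Real.sqrt 2*μ) : ℂ) *
     ((↑(Real.sqrt (1+ω) * C) : ℂ) - Complex.I * (↑(Real.sqrt (1-ω) * S) : ℂ)) *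
     (↑(2*S*C * (2*μ)) : ℂ)) / ((↑(ω + (C^2+S^2)) : ℂ))^2
    = (↑(Real.sqrt 2*μ) : ℂ) *
      (Complex.ofReal (Real.sqrt (1+ω)*(μ*(S*(ω+(C^2+S^2)) - 4*S*C^2))) -
       Complex.I * Complex.ofReal (Real.sqrt (1-ω)*(μ*(C*(ω+(C^2+S^2)) - 4*S^2*C)))) /
      ((↑(ω + (C^2+S^2)) : ℂ))^2 := by
    push_cast; ring
  rw [hz]
  rw [norm_div, norm_mul, norm_pow, Complex.norm_real, Complex.norm_real, Real.norm_eq_abs,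
    Real.norm_eq_abs]
  have hmid : (‖(Complex.ofReal (Real.sqrt (1+ω)*(μ*(S*(ω+(C^2+S^2)) - 4*S*C^2))) -
       Complex.I * Complex.ofReal (Real.sqrt (1-ω)*(μ*(C*(ω+(C^2+S^2)) - 4*S^2*C))))‖)^2
      = (Real.sqrt (1+ω)*(μ*(S*(ω+(C^2+S^2)) - 4*S*C^2)))^2
        + (Real.sqrt (1-ω)*(μ*(C*(ω+(C^2+S^2)) - 4*S^2*C)))^2 := by
    rw [Complex.sq_norm]
    simp only [Complex.normSq_apply, Complex.sub_re, Complex.sub_im, Complex.mul_re,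
      Complex.mul_im, Complex.I_re, Complex.I_im, Complex.ofReal_re, Complex.ofReal_im]
    ring
  rw [div_pow, mul_pow, hmid]
  rw [abs_of_nonneg (by positivity : (0:ℝ) ≤ Real.sqrt 2*μ), abs_of_pos hd]
  have eA1 : (Real.sqrt (1+ω)*(μ*(S*(ω+(C^2+S^2)) - 4*S*C^2)))^2
      = (1+ω)*(1-ω^2)*(S^2*(3-ω+2*S^2)^2) := by
    have e : (Real.sqrt (1+ω)*(μ*(S*(ω+(C^2+S^2)) - 4*S*C^2)))^2
        = Real.sqrt (1+ω)^2*(μ^2*(S*(ω+(C^2+S^2)) - 4*S*C^2)^2) := by ring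
    rw [e, ha2, hμ2, hC2]; ring
  have eA2 : (Real.sqrt (1-ω)*(μ*(C*(ω+(C^2+S^2)) - 4*S^2*C)))^2
      = (1-ω)*(1-ω^2)*((S^2+1)*(1+ω-2*S^2)^2) := by
    have e : (Real.sqrt (1-ω)*(μ*(C*(ω+(C^2+S^2)) - 4*S^2*C)))^2
        = Real.sqrt (1-ω)^2*(μ^2*(C^2*((ω+(C^2+S^2)) - 4*S^2)^2)) := by ring
    rw [e, hb2, hμ2, hC2]; ring
  have ec : (Real.sqrt 2*μ)^2 = 2*(1-ω^2) := by
    rw [mul_pow, Real.sq_sqrt (by norm_num : (0:ℝ) ≤ 2), hμ2]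
  have eD : ω+(C^2+S^2) = 1+ω+2*S^2 := by rw [hC2]; ring
  rw [eA1, eA2, ec, eD]
  have hD4 : (0:ℝ) < (1+ω+2*S^2) := by nlinarith [sq_nonneg S]
  field_simp
  ring

noncomputable def tsF (ω : ℝ) : ℝ → ℝ := fun x =>
  2*(1+ω^2) * Real.arctan (Real.sqrt ((1-ω)/(1+ω)) *
      (Real.sinh (Real.sqrt (1-ω^2)*x) / Real.cosh (Real.sqrt (1-ω^2)*x)))
  - 2*ω*Real.sqrt (1-ω^2) *
      (Real.sinh (2*(Real.sqrt (1-ω^2)*x)) / (ω + Real.cosh (2*(Real.sqrt (1-ω^2)*x))))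

lemma ts_F_hasDerivAt (ω : ℝ) (h1 : -1 < ω) (h2 : ω < 1) (x : ℝ) :
    HasDerivAt (tsF ω) (tsf ω x) x := by
  set μ := Real.sqrt (1-ω^2) with hμdef
  set k := Real.sqrt ((1-ω)/(1+ω)) with hkdef
  set S := Real.sinh (μ*x) with hSdef
  set C := Real.cosh (μ*x) with hCdef
  have haω : (1:ℝ)+ω ≠ 0 := by linarith
  have hμ2 : μ^2 = 1-ω^2 := Real.sq_sqrt (by nlinarith)
  have hk2 : k^2 = (1-ω)/(1+ω) := Real.sq_sqrt (div_nonneg (by linarith) (by linarith))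
  have hkμ : k*μ = 1-ω := by
    rw [hμdef, hkdef, ← Real.sqrt_mul (div_nonneg (by linarith) (by linarith))]
    rw [show (1-ω)/(1+ω)*(1-ω^2) = (1-ω)^2 by rw [div_mul_eq_mul_div, div_eq_iff haω]; ring]
    exact Real.sqrt_sq (by linarith)
  have hC2 : C^2 = S^2+1 := Real.cosh_sq _
  have hC0 : (0:ℝ) < C := Real.cosh_pos _
  have hS1 : (S:ℝ)^2+1 ≠ 0 := by positivity
  have hD0 : (0:ℝ) < 1+ω+2*S^2 := by nlinarith [sq_nonneg S]
  have hden0 : (0:ℝ) < ω + Real.cosh (2*(μ*x)) := by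
    have := Real.one_le_cosh (2*(μ*x)); linarith
  -- derivative construction
  have hμx : HasDerivAt (fun y : ℝ => μ * y) μ x := by
    simpa using (hasDerivAt_id x).const_mul μ
  have hS' : HasDerivAt (fun y : ℝ => Real.sinh (μ*y)) (C*μ) x :=
    (Real.hasDerivAt_sinh _).comp x hμx
  have hC' : HasDerivAt (fun y : ℝ => Real.cosh (μ*y)) (S*μ) x :=
    (Real.hasDerivAt_cosh _).comp x hμx
  have hT := hS'.div hC' hC0.ne'
  have hkT := hT.const_mul k
  have harct := (Real.hasDerivAt_arctan (k*(S/C))).comp x hkT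
  have hA := harct.const_mul (2*(1+ω^2))
  have h2μx : HasDerivAt (fun y : ℝ => 2*(μ*y)) (2*μ) x := hμx.const_mul 2
  have hS2 : HasDerivAt (fun y : ℝ => Real.sinh (2*(μ*y))) (Real.cosh (2*(μ*x))*(2*μ)) x :=
    (Real.hasDerivAt_sinh _).comp x h2μx
  have hd2 : HasDerivAt (fun y : ℝ => ω + Real.cosh (2*(μ*y))) (Real.sinh (2*(μ*x))*(2*μ)) x :=
    ((Real.hasDerivAt_cosh _).comp x h2μx).const_add ω
  have hfrac := hS2.div hd2 hden0.ne'
  have hB := hfrac.const_mul (2*ω*μ)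
  have hFd := hA.sub hB
  -- identify the derivative value with tsf ω x
  have harg : Real.cosh (2*(μ*x)) = C^2+S^2 := Real.cosh_two_mul _
  have harg2 : Real.sinh (2*(μ*x)) = 2*S*C := Real.sinh_two_mul _
  rw [harg, harg2] at hFd
  rw [← hSdef, ← hCdef] at hFd
  have eD : ω+(C^2+S^2) = 1+ω+2*S^2 := by rw [hC2]; ring
  have hval : 2 * (1 + ω ^ 2) *
        (1 / (1 + (k * (S / C)) ^ 2) * (k * ((C * μ * C - S * (S * μ)) / C ^ 2))) -
      2 * ω * μ *
        (((C ^ 2 + S ^ 2) * (2 * μ) * (ω + (C ^ 2 + S ^ 2)) - 2 * S * C * (2 * S * C * (2 * μ))) /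
          (ω + (C ^ 2 + S ^ 2)) ^ 2)
      = tsf ω x := by
    have e2 : 1+(k*(S/C))^2 = (1+ω+2*S^2)/((1+ω)*C^2) := by
      rw [show (k*(S/C))^2 = k^2*S^2/C^2 by ring, hk2, hC2]
      field_simp
      ring
    have e3 : C*μ*C - S*(S*μ) = μ := by linear_combination μ * hC2
    have e4 : (C^2+S^2)*(2*μ)*(ω+(C^2+S^2)) - 2*S*C*(2*S*C*(2*μ))
        = 2*μ*((1+2*S^2)*(1+ω+2*S^2)-4*S^2*(S^2+1)) := by
      linear_combination (2*μ*(1+2*S^2) + 2*μ*(1+ω+2*S^2) + 2*μ*(C^2-S^2-1) - 8*μ*S^2) * hC2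
    rw [e2, e3, e4, eD]
    have hkey : 2*(1+ω^2) * (1/((1+ω+2*S^2)/((1+ω)*C^2)) * (k*(μ/C^2)))
        = 2*(1+ω^2)*(1-ω^2)/(1+ω+2*S^2) := by
      rw [one_div_div]
      rw [show (1:ℝ)-ω^2 = (1+ω)*(k*μ) by rw [hkμ]; ring]
      field_simp
    rw [hkey]
    have e5 : 2*ω*μ*(2*μ*((1+2*S^2)*(1+ω+2*S^2)-4*S^2*(S^2+1))/(1+ω+2*S^2)^2)
        = 4*ω*(1-ω^2)*((1+2*S^2)*(1+ω+2*S^2)-4*S^2*(S^2+1))/(1+ω+2*S^2)^2 := by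
      rw [show 2*ω*μ*(2*μ*((1+2*S^2)*(1+ω+2*S^2)-4*S^2*(S^2+1))/(1+ω+2*S^2)^2)
          = 4*ω*μ^2*((1+2*S^2)*(1+ω+2*S^2)-4*S^2*(S^2+1))/(1+ω+2*S^2)^2 by ring, hμ2]
    rw [e5]
    unfold tsf
    rw [← hμdef, ← hSdef]
    field_simp
    ring
  rw [hval] at hFd
  exact hFd

lemma ts_tanh_tendsto : Tendsto (fun y : ℝ => Real.sinh y / Real.cosh y) atTop (nhds 1) := by
  have hfun : (fun y : ℝ => Real.sinh y / Real.cosh y)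
      = fun y : ℝ => 1 - 2/(Real.exp (2*y)+1) := by
    funext y
    rw [Real.sinh_eq, Real.cosh_eq, two_mul, Real.exp_add, Real.exp_neg]
    have he : Real.exp y ≠ 0 := (Real.exp_pos y).ne'
    have h2 : Real.exp y * Real.exp y + 1 ≠ 0 := by positivity
    field_simp
    ring
  rw [hfun]
  have h : Tendsto (fun y : ℝ => Real.exp (2*y)+1) atTop atTop := by
    apply tendsto_atTop_add_const_right
    exact Real.tendsto_exp_atTop.comp (tendsto_id.const_mul_atTop two_pos)
  have h0 : Tendsto (fun y : ℝ => 2/(Real.exp (2*y)+1)) atTop (nhds 0) :=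
    Tendsto.div_atTop tendsto_const_nhds h
  simpa using tendsto_const_nhds.sub h0

lemma ts_cosh_tendsto : Tendsto Real.cosh atTop atTop := by
  apply tendsto_atTop_mono (fun y => ?_) (Real.tendsto_exp_atTop.atTop_div_const two_pos)
  rw [Real.cosh_eq]
  have := (Real.exp_pos (-y)).le
  linarith

lemma ts_frac_tendsto (ω : ℝ) (h1 : -1 < ω) :
    Tendsto (fun y : ℝ => Real.sinh y / (ω + Real.cosh y)) atTop (nhds 1) := by
  have hfun : (fun y : ℝ => Real.sinh y / (ω + Real.cosh y))
      = fun y : ℝ => (Real.sinh y / Real.cosh y) * (1/(1+ω/Real.cosh y)) := by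
    funext y
    have hc : (0:ℝ) < Real.cosh y := Real.cosh_pos _
    have hd : (0:ℝ) < ω + Real.cosh y := by have := Real.one_le_cosh y; linarith
    rw [div_mul_div_comm, mul_one,
      show Real.cosh y * (1+ω/Real.cosh y) = ω + Real.cosh y by
        rw [mul_add, mul_one, mul_div_cancel₀ _ hc.ne']; ring]
  rw [hfun]
  have h0 : Tendsto (fun y : ℝ => ω/Real.cosh y) atTop (nhds 0) :=
    Tendsto.div_atTop tendsto_const_nhds ts_cosh_tendsto
  have h3 : Tendsto (fun y : ℝ => 1/(1+ω/Real.cosh y)) atTop (nhds 1) := by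
    have := (tendsto_const_nhds (x := (1:ℝ)).add h0).inv₀ (by norm_num)
    simpa using this
  simpa using ts_tanh_tendsto.mul h3

lemma ts_F_tendsto (ω : ℝ) (h1 : -1 < ω) (h2 : ω < 1) :
    Tendsto (tsF ω) atTop
      (nhds (2*(1+ω^2)*Real.arctan (Real.sqrt ((1-ω)/(1+ω))) - 2*ω*Real.sqrt (1-ω^2))) := by
  have hμpos : (0:ℝ) < Real.sqrt (1-ω^2) := Real.sqrt_pos.mpr (by nlinarith)
  have hμx_top : Tendsto (fun x : ℝ => Real.sqrt (1-ω^2)*x) atTop atTop :=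
    tendsto_id.const_mul_atTop hμpos
  have h2μx_top : Tendsto (fun x : ℝ => 2*(Real.sqrt (1-ω^2)*x)) atTop atTop :=
    hμx_top.const_mul_atTop two_pos
  have htanh : Tendsto (fun x : ℝ =>
      Real.sinh (Real.sqrt (1-ω^2)*x) / Real.cosh (Real.sqrt (1-ω^2)*x)) atTop (nhds 1) :=
    ts_tanh_tendsto.comp hμx_top
  have hk1 : Tendsto (fun x : ℝ => Real.sqrt ((1-ω)/(1+ω)) *
      (Real.sinh (Real.sqrt (1-ω^2)*x) / Real.cosh (Real.sqrt (1-ω^2)*x))) atTop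
      (nhds (Real.sqrt ((1-ω)/(1+ω)))) := by
    simpa using htanh.const_mul (Real.sqrt ((1-ω)/(1+ω)))
  have harc : Tendsto (fun x : ℝ => Real.arctan (Real.sqrt ((1-ω)/(1+ω)) *
      (Real.sinh (Real.sqrt (1-ω^2)*x) / Real.cosh (Real.sqrt (1-ω^2)*x)))) atTop
      (nhds (Real.arctan (Real.sqrt ((1-ω)/(1+ω))))) :=
    (Real.continuous_arctan.tendsto _).comp hk1
  have hfr : Tendsto (fun x : ℝ => Real.sinh (2*(Real.sqrt (1-ω^2)*x)) /
      (ω + Real.cosh (2*(Real.sqrt (1-ω^2)*x)))) atTop (nhds 1) :=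
    (ts_frac_tendsto ω h1).comp h2μx_top
  have := (harc.const_mul (2*(1+ω^2))).sub ((hfr.const_mul (2*ω*Real.sqrt (1-ω^2))))
  unfold tsF
  simpa using this

end ThirringAux

/-- ∫ |U_ω'|² dx = −4ω√(1−ω²) + 4(1+ω²) arctan √((1−ω)/(1+ω)). -/
theorem thirringSoliton_deriv_L2 (ω : ℝ) (hω : ω ∈ Set.Ioo (-1 : ℝ) 1) :
    ∫ x : ℝ, ‖deriv (thirringSoliton ω) x‖ ^ 2
      = -4 * ω * Real.sqrt (1 - ω ^ 2)
        + 4 * (1 + ω ^ 2) * Real.arctan (Real.sqrt ((1 - ω) / (1 + ω))) := by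
  obtain ⟨h1, h2⟩ := hω
  have hint : (fun x : ℝ => ‖deriv (thirringSoliton ω) x‖^2) = tsf ω := by
    funext x
    rw [(ts_hasDerivAt ω h1 x).deriv, ts_abs ω h1 h2 x]
  rw [show (∫ x : ℝ, ‖deriv (thirringSoliton ω) x‖ ^ 2) = ∫ x : ℝ, tsf ω x by
    rw [hint]]
  have heven : ∀ x : ℝ, tsf ω |x| = tsf ω x := by
    intro x
    unfold tsf
    rcases abs_choice x with h|h <;> rw [h]
    rw [show Real.sqrt (1-ω^2)*(-x) = -(Real.sqrt (1-ω^2)*x) by ring, Real.sinh_neg]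
    ring
  have hnonneg : ∀ x ∈ Set.Ioi (0:ℝ), 0 ≤ tsf ω x := by
    intro x _
    rw [← ts_abs ω h1 h2 x]
    positivity
  have hF0 : tsF ω 0 = 0 := by
    unfold tsF
    norm_num [Real.sinh_zero, Real.arctan_zero]
  have hIoi : ∫ x in Set.Ioi (0:ℝ), tsf ω x
      = (2*(1+ω^2)*Real.arctan (Real.sqrt ((1-ω)/(1+ω))) - 2*ω*Real.sqrt (1-ω^2)) - tsF ω 0 :=
    integral_Ioi_of_hasDerivAt_of_nonneg' (fun x _ => ts_F_hasDerivAt ω h1 h2 x)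
      hnonneg (ts_F_tendsto ω h1 h2)
  rw [show (∫ x : ℝ, tsf ω x) = ∫ x : ℝ, tsf ω |x| by
    congr 1; funext x; rw [heven x]]
  rw [integral_comp_abs, hIoi, hF0]
  ring
end

section
/- Let D_{ω,k} be the 4×4 Dirac symbol as above and J the 4×4 matrix with J₁₃ = J₂₄ = 1, J₃₁ = J₄₂ = −1 and zeros elsewhere. Then det(D_{ω,k} − i p J − iλσ) = 0, with σ = diag(1,−1,1,−1), holds exactly when λ ∈ {±i(√(1+p²+k²)+ω), ±i(√(1+p²+k²)−ω)}. -/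
/-- Dispersion relation for the free massive Dirac operator with `E_p = −ipJ`:
`det (D_{ω,k} − ipJ − iλσ) = 0` iff `λ = ±i(√(1+p²+k²)+ω)` or `λ = ±i(√(1+p²+k²)−ω)`. -/
theorem grossNeveu_continuous_spectrum (k p ω : ℝ) (lam : ℂ) :
    Matrix.det
        !![(k : ℂ) + ω - Complex.I * lam, 0, -1 - Complex.I * p, 0;
           0, -(k : ℂ) + ω + Complex.I * lam, 0, -1 - Complex.I * p;
           -1 + Complex.I * p, 0, -(k : ℂ) + ω - Complex.I * lam, 0;
           0, -1 + Complex.I * p, 0, (k : ℂ) + ω + Complex.I * lam] = 0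
      ↔ lam = Complex.I * ((Real.sqrt (1 + p ^ 2 + k ^ 2) : ℂ) + ω)
        ∨ lam = -(Complex.I * ((Real.sqrt (1 + p ^ 2 + k ^ 2) : ℂ) + ω))
        ∨ lam = Complex.I * ((Real.sqrt (1 + p ^ 2 + k ^ 2) : ℂ) - ω)
        ∨ lam = -(Complex.I * ((Real.sqrt (1 + p ^ 2 + k ^ 2) : ℂ) - ω)) := by
  set s : ℂ := (Real.sqrt (1 + p ^ 2 + k ^ 2) : ℂ) with hsdef
  have hs2 : s ^ 2 = 1 + (p : ℂ) ^ 2 + (k : ℂ) ^ 2 := by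
    rw [hsdef]
    norm_cast
    rw [Real.sq_sqrt (by positivity)]
  have key :
      Matrix.det
        !![(k : ℂ) + ω - Complex.I * lam, 0, -1 - Complex.I * p, 0;
           0, -(k : ℂ) + ω + Complex.I * lam, 0, -1 - Complex.I * p;
           -1 + Complex.I * p, 0, -(k : ℂ) + ω - Complex.I * lam, 0;
           0, -1 + Complex.I * p, 0, (k : ℂ) + ω + Complex.I * lam]
      = (lam - Complex.I * (s + ω)) * (lam + Complex.I * (s + ω)) *
        ((lam - Complex.I * (s - ω)) * (lam + Complex.I * (s - ω))) := by
    simp [Matrix.det_succ_row_zero, Fin.sum_univ_succ, Fin.succAbove, Matrix.cons_val_zero, Matrix.cons_val_one]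
    have hI : Complex.I ^ 2 = -1 := Complex.I_sq
    linear_combination (2*lam^2*((ω:ℂ)^2 - (1+(p:ℂ)^2+(k:ℂ)^2)) + (Complex.I^2-1)*lam^4
        - 4*(ω:ℂ)^2*lam^2 + 2*lam^2*(s^2+(ω:ℂ)^2) - (Complex.I^2-1)*(s^2-(ω:ℂ)^2)^2
        + 2*(p:ℂ)^2*((ω:ℂ)^2-(k:ℂ)^2-1+Complex.I^2*lam^2) + (p:ℂ)^4*(Complex.I^2-1)) * hI
      + (-(2*lam^2 + s^2 + (1+(p:ℂ)^2+(k:ℂ)^2) - 2*(ω:ℂ)^2)) * hs2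
  rw [key]
  simp only [mul_eq_zero, sub_eq_zero, add_eq_zero_iff_eq_neg]
  tauto
end

section
/- For the massive Thirring soliton U_ω, the vector Ṽ_t = iωx(0,0,U_ω,−conj U_ω)ᵗ − (1/2)(0,0,U_ω,conj U_ω)ᵗ satisfies H₋ applied to its last two components equals iσ₃ applied to the last two components of V_t-related data; concretely, the 2-component function W(x) = iωx(U_ω(x),−conj U_ω(x))ᵗ − (1/2)(U_ω(x),conj U_ω(x))ᵗ satisfies H₋ W = iσ₃(U_ω', conj(U_ω)')ᵗ, where H₋ = [[−i∂ₓ+ω, 1−U_ω²],[1−conj(U_ω)², i∂ₓ+ω]]. -/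
/-- First component of the generalized translational eigenvector `W`. -/
noncomputable def W₁ (ω x : ℝ) : ℂ :=
  Complex.I * ω * x * thirringSoliton ω x - (1/2 : ℂ) * thirringSoliton ω x

/-- Second component of the generalized translational eigenvector `W`. -/
noncomputable def W₂ (ω x : ℝ) : ℂ :=
  -(Complex.I * ω * x) * (starRingEnd ℂ) (thirringSoliton ω x)
    - (1/2 : ℂ) * (starRingEnd ℂ) (thirringSoliton ω x)

/-- The generalized eigenvector identity `H₋ W = iσ₃ (U_ω', conj(U_ω)')ᵗ`
for the translational mode of the massive Thirring soliton, where
`H₋(f,g)ᵗ = (−if' + ωf + (1−U_ω²)g, ig' + ωg + (1−conj(U_ω)²)f)ᵗ`. -/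
theorem thirring_generalized_eigenvector (ω : ℝ) (hω : ω ∈ Set.Ioo (-1 : ℝ) 1) (x : ℝ) :
    (-Complex.I * deriv (W₁ ω) x + (ω : ℂ) * W₁ ω x
        + (1 - thirringSoliton ω x ^ 2) * W₂ ω x
      = Complex.I * deriv (thirringSoliton ω) x) ∧
    (Complex.I * deriv (W₂ ω) x + (ω : ℂ) * W₂ ω x
        + (1 - ((starRingEnd ℂ) (thirringSoliton ω x)) ^ 2) * W₁ ω x
      = -(Complex.I * (starRingEnd ℂ) (deriv (thirringSoliton ω) x))) := by
  obtain ⟨hω1, hω2⟩ := hω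
  set m := Real.sqrt (1 - ω^2) with hmdef
  set a := Real.sqrt (1 + ω) with hadef
  set b := Real.sqrt (1 - ω) with hbdef
  set r := Real.sqrt 2 with hrdef
  set c := Real.cosh (m*x) with hcdef
  set s := Real.sinh (m*x) with hsdef
  have h1ω : (0:ℝ) < 1 - ω^2 := by nlinarith
  have hm2 : m^2 = 1 - ω^2 := Real.sq_sqrt h1ω.le
  have ha2 : a^2 = 1 + ω := Real.sq_sqrt (by linarith)
  have hb2 : b^2 = 1 - ω := Real.sq_sqrt (by linarith)
  have hab : m = a * b := by
    rw [hmdef, hadef, hbdef, show (1 - ω^2) = (1+ω)*(1-ω) by ring,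
      Real.sqrt_mul (by linarith : (0:ℝ) ≤ 1+ω)]
  have hr2 : r^2 = 2 := Real.sq_sqrt (by norm_num)
  have hc2 : c^2 = s^2 + 1 := by rw [hcdef, hsdef, Real.cosh_sq]
  have hDpos : 0 < ω + Real.cosh (2*m*x) := by
    have := Real.one_le_cosh (2*m*x); linarith
  have hDenC : (↑(ω + Real.cosh (2*m*x)) : ℂ) ≠ 0 := by
    exact_mod_cast ne_of_gt hDpos
  -- derivative scaffolding
  have hmy : HasDerivAt (fun y : ℝ => m*y) m x := by
    simpa using (hasDerivAt_id x).const_mul m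
  have h2my : HasDerivAt (fun y : ℝ => 2*m*y) (2*m) x := by
    simpa [mul_assoc] using (hasDerivAt_id x).const_mul (2*m)
  have hcosh : HasDerivAt (fun y => Real.cosh (m*y)) (s*m) x :=
    (Real.hasDerivAt_cosh (m*x)).comp x hmy
  have hsinh : HasDerivAt (fun y => Real.sinh (m*y)) (c*m) x :=
    (Real.hasDerivAt_sinh (m*x)).comp x hmy
  have hcosh2 : HasDerivAt (fun y => Real.cosh (2*m*y)) (Real.sinh (2*m*x) * (2*m)) x :=
    (Real.hasDerivAt_cosh (2*m*x)).comp x h2my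
  have hN : HasDerivAt (fun y => (↑(a * Real.cosh (m*y)) : ℂ) - Complex.I * ↑(b * Real.sinh (m*y)))
      ((↑(a*(s*m)) : ℂ) - Complex.I * ↑(b*(c*m))) x :=
    ((hcosh.const_mul a).ofReal_comp).sub (((hsinh.const_mul b).ofReal_comp).const_mul Complex.I)
  have hDen : HasDerivAt (fun y => (↑(ω + Real.cosh (2*m*y)) : ℂ))
      (↑(Real.sinh (2*m*x) * (2*m)) : ℂ) x :=
    by simpa using ((hasDerivAt_const x ω).add hcosh2).ofReal_comp
  have hkey : thirringSoliton ω = fun y =>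
      (↑(r*m) : ℂ) * ((↑(a * Real.cosh (m*y)) : ℂ) - Complex.I * ↑(b * Real.sinh (m*y))) /
        (↑(ω + Real.cosh (2*m*y)) : ℂ) := rfl
  have hU : HasDerivAt (thirringSoliton ω)
      (((↑(r*m) : ℂ) * ((↑(a*(s*m)) : ℂ) - Complex.I * ↑(b*(c*m))) * ↑(ω + Real.cosh (2*m*x))
        - (↑(r*m) : ℂ) * ((↑(a * Real.cosh (m*x)) : ℂ) - Complex.I * ↑(b * Real.sinh (m*x)))
            * ↑(Real.sinh (2*m*x) * (2*m))) / (↑(ω + Real.cosh (2*m*x)) : ℂ)^2) x := by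
    rw [hkey]
    exact (hN.const_mul ((↑(r*m) : ℂ))).div hDen hDenC
  have hderiv := hU.deriv
  have hcosh2x : Real.cosh (2*m*x) = c^2 + s^2 := by
    rw [show 2*m*x = 2*(m*x) by ring, Real.cosh_two_mul]
  have hsinh2x : Real.sinh (2*m*x) = 2*s*c := by
    rw [show 2*m*x = 2*(m*x) by ring, Real.sinh_two_mul]
  have hUval : thirringSoliton ω x
      = ↑r * ↑m * (↑a*↑c - Complex.I*(↑b*↑s)) / (↑ω + ((↑c:ℂ)^2 + (↑s:ℂ)^2)) := by
    simp only [hkey]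
    rw [hcosh2x, ← hcdef, ← hsdef]
    push_cast
    ring
  have hEval : deriv (thirringSoliton ω) x
      = (↑r*↑m*(↑a*(↑s*↑m) - Complex.I*(↑b*(↑c*↑m))) * (↑ω + ((↑c:ℂ)^2 + (↑s:ℂ)^2))
          - ↑r*↑m*(↑a*↑c - Complex.I*(↑b*↑s)) * ((2*↑s*↑c)*(2*↑m)))
        / (↑ω + ((↑c:ℂ)^2 + (↑s:ℂ)^2))^2 := by
    rw [hderiv, hcosh2x, hsinh2x, ← hcdef, ← hsdef]
    push_cast
    ring
  have hconjU : (starRingEnd ℂ) (thirringSoliton ω x)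
      = ↑r * ↑m * (↑a*↑c + Complex.I*(↑b*↑s)) / (↑ω + ((↑c:ℂ)^2 + (↑s:ℂ)^2)) := by
    rw [hUval]
    simp only [map_div₀, map_mul, map_sub, map_add, map_pow, Complex.conj_ofReal, Complex.conj_I]
    ring
  have hDC : ((↑ω:ℂ) + ((↑c:ℂ)^2 + (↑s:ℂ)^2)) ≠ 0 := by
    have h0 : (0:ℝ) < ω + (c^2 + s^2) := by
      have := hDpos
      rw [hcosh2x] at this
      linarith
    intro h
    have : (↑(ω + (c^2+s^2)) : ℂ) = 0 := by push_cast; linear_combination h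
    exact absurd (Complex.ofReal_eq_zero.mp this) (ne_of_gt h0)
  have HA : ((↑a:ℂ))^2 = 1 + ↑ω := by exact_mod_cast congrArg (Complex.ofReal) ha2
  have HB : ((↑b:ℂ))^2 = 1 - ↑ω := by exact_mod_cast congrArg (Complex.ofReal) hb2
  have HM : (↑m:ℂ) = ↑a * ↑b := by exact_mod_cast congrArg (Complex.ofReal) hab
  have HR : ((↑r:ℂ))^2 = 2 := by exact_mod_cast congrArg (Complex.ofReal) hr2
  have HC : ((↑c:ℂ))^2 = (↑s:ℂ)^2 + 1 := by exact_mod_cast congrArg (Complex.ofReal) hc2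
  have poly : Complex.I * ((↑r*↑m*(↑a*(↑s*↑m) - Complex.I*(↑b*(↑c*↑m)))) * (↑ω + ((↑c:ℂ)^2 + (↑s:ℂ)^2))
      - ↑r*↑m*(↑a*↑c - Complex.I*(↑b*↑s))*(2*↑s*↑c*(2*↑m))) * (↑ω + ((↑c:ℂ)^2 + (↑s:ℂ)^2))
      - ↑ω*(↑r*↑m*(↑a*↑c - Complex.I*(↑b*↑s)))*(↑ω + ((↑c:ℂ)^2 + (↑s:ℂ)^2))^2
      + ↑r*↑m*(↑a*↑c + Complex.I*(↑b*↑s))*(↑ω + ((↑c:ℂ)^2 + (↑s:ℂ)^2))^2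
      = ((↑r:ℂ)*↑m)^3*(↑a*↑c - Complex.I*(↑b*↑s))^2*(↑a*↑c + Complex.I*(↑b*↑s)) := by
    linear_combination ((1)*(↑r:ℂ)*(↑b:ℂ)*(↑s:ℂ)*(↑ω:ℂ)^2*Complex.I + (1)*(↑r:ℂ)*(↑b:ℂ)*(↑s:ℂ)*(↑ω:ℂ)^3*Complex.I + (2)*(↑r:ℂ)*(↑b:ℂ)*(↑s:ℂ)^3*(↑ω:ℂ)*Complex.I + (2)*(↑r:ℂ)*(↑b:ℂ)*(↑s:ℂ)^3*(↑ω:ℂ)^2*Complex.I + (1)*(↑r:ℂ)*(↑b:ℂ)*(↑s:ℂ)^5*Complex.I + (1)*(↑r:ℂ)*(↑b:ℂ)*(↑s:ℂ)^5*(↑ω:ℂ)*Complex.I + (2)*(↑r:ℂ)*(↑b:ℂ)*(↑c:ℂ)^2*(↑s:ℂ)*(↑ω:ℂ)*Complex.I + (2)*(↑r:ℂ)*(↑b:ℂ)*(↑c:ℂ)^2*(↑s:ℂ)*(↑ω:ℂ)^2*Complex.I + (2)*(↑r:ℂ)*(↑b:ℂ)*(↑c:ℂ)^2*(↑s:ℂ)^3*Complex.I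 + (2)*(↑r:ℂ)*(↑b:ℂ)*(↑c:ℂ)^2*(↑s:ℂ)^3*(↑ω:ℂ)*Complex.I + (1)*(↑r:ℂ)*(↑b:ℂ)*(↑c:ℂ)^4*(↑s:ℂ)*Complex.I + (1)*(↑r:ℂ)*(↑b:ℂ)*(↑c:ℂ)^4*(↑s:ℂ)*(↑ω:ℂ)*Complex.I + (1)*(↑r:ℂ)*(↑a:ℂ)*(↑c:ℂ)*(↑ω:ℂ)^2 + (-1)*(↑r:ℂ)*(↑a:ℂ)*(↑c:ℂ)*(↑ω:ℂ)^3 + (2)*(↑r:ℂ)*(↑a:ℂ)*(↑c:ℂ)*(↑s:ℂ)^2*(↑ω:ℂ) + (-2)*(↑r:ℂ)*(↑a:ℂ)*(↑c:ℂ)*(↑s:ℂ)^2*(↑ω:ℂ)^2 + (1)*(↑r:ℂ)*(↑a:ℂ)*(↑c:ℂ)*(↑s:ℂ)^4 + (-1)*(↑r:ℂ)*(↑a:ℂ)*(↑c:ℂ)*(↑s:ℂ)^4*(↑ω:ℂ) + (2)*(↑r:ℂ)*(↑a:ℂ)*(↑c:ℂ)^3*(↑ω:ℂ) + (-2)*(↑r:ℂ)*(↑a:ℂ)*(↑c:ℂ)^3*(↑ω:ℂ)^2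 + (2)*(↑r:ℂ)*(↑a:ℂ)*(↑c:ℂ)^3*(↑s:ℂ)^2 + (-2)*(↑r:ℂ)*(↑a:ℂ)*(↑c:ℂ)^3*(↑s:ℂ)^2*(↑ω:ℂ) + (1)*(↑r:ℂ)*(↑a:ℂ)*(↑c:ℂ)^5 + (-1)*(↑r:ℂ)*(↑a:ℂ)*(↑c:ℂ)^5*(↑ω:ℂ) + (-1)*(↑r:ℂ)*(↑a:ℂ)*(↑b:ℂ)^2*(↑c:ℂ)*(↑ω:ℂ)^2*Complex.I^2 + (2)*(↑r:ℂ)*(↑a:ℂ)*(↑b:ℂ)^2*(↑c:ℂ)*(↑s:ℂ)^2*(↑ω:ℂ)*Complex.I^2 + (3)*(↑r:ℂ)*(↑a:ℂ)*(↑b:ℂ)^2*(↑c:ℂ)*(↑s:ℂ)^4*Complex.I^2 + (-2)*(↑r:ℂ)*(↑a:ℂ)*(↑b:ℂ)^2*(↑c:ℂ)^3*(↑ω:ℂ)*Complex.I^2 + (2)*(↑r:ℂ)*(↑a:ℂ)*(↑b:ℂ)^2*(↑c:ℂ)^3*(↑s:ℂ)^2*Complex.I^2 + (-1)*(↑r:ℂ)*(↑a:ℂ)*(↑b:ℂ)^2*(↑c:ℂ)^5*Complex.I^2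 + (1)*(↑r:ℂ)*(↑a:ℂ)^2*(↑b:ℂ)*(↑s:ℂ)*(↑ω:ℂ)^2*Complex.I + (2)*(↑r:ℂ)*(↑a:ℂ)^2*(↑b:ℂ)*(↑s:ℂ)^3*(↑ω:ℂ)*Complex.I + (1)*(↑r:ℂ)*(↑a:ℂ)^2*(↑b:ℂ)*(↑s:ℂ)^5*Complex.I + (-2)*(↑r:ℂ)*(↑a:ℂ)^2*(↑b:ℂ)*(↑c:ℂ)^2*(↑s:ℂ)*(↑ω:ℂ)*Complex.I + (-2)*(↑r:ℂ)*(↑a:ℂ)^2*(↑b:ℂ)*(↑c:ℂ)^2*(↑s:ℂ)^3*Complex.I + (-3)*(↑r:ℂ)*(↑a:ℂ)^2*(↑b:ℂ)*(↑c:ℂ)^4*(↑s:ℂ)*Complex.I + (-1)*(↑r:ℂ)*(↑m:ℂ)*(↑b:ℂ)*(↑c:ℂ)*(↑ω:ℂ)^2*Complex.I^2 + (2)*(↑r:ℂ)*(↑m:ℂ)*(↑b:ℂ)*(↑c:ℂ)*(↑s:ℂ)^2*(↑ω:ℂ)*Complex.I^2 + (3)*(↑r:ℂ)*(↑m:ℂ)*(↑b:ℂ)*(↑c:ℂ)*(↑s:ℂ)^4*Complex.I^2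 + (-2)*(↑r:ℂ)*(↑m:ℂ)*(↑b:ℂ)*(↑c:ℂ)^3*(↑ω:ℂ)*Complex.I^2 + (2)*(↑r:ℂ)*(↑m:ℂ)*(↑b:ℂ)*(↑c:ℂ)^3*(↑s:ℂ)^2*Complex.I^2 + (-1)*(↑r:ℂ)*(↑m:ℂ)*(↑b:ℂ)*(↑c:ℂ)^5*Complex.I^2 + (1)*(↑r:ℂ)*(↑m:ℂ)*(↑a:ℂ)*(↑s:ℂ)*(↑ω:ℂ)^2*Complex.I + (2)*(↑r:ℂ)*(↑m:ℂ)*(↑a:ℂ)*(↑s:ℂ)^3*(↑ω:ℂ)*Complex.I + (1)*(↑r:ℂ)*(↑m:ℂ)*(↑a:ℂ)*(↑s:ℂ)^5*Complex.I + (-2)*(↑r:ℂ)*(↑m:ℂ)*(↑a:ℂ)*(↑c:ℂ)^2*(↑s:ℂ)*(↑ω:ℂ)*Complex.I + (-2)*(↑r:ℂ)*(↑m:ℂ)*(↑a:ℂ)*(↑c:ℂ)^2*(↑s:ℂ)^3*Complex.I + (-3)*(↑r:ℂ)*(↑m:ℂ)*(↑a:ℂ)*(↑c:ℂ)^4*(↑s:ℂ)*Complex.I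 + (-1)*(↑r:ℂ)^3*(↑a:ℂ)^2*(↑b:ℂ)^5*(↑s:ℂ)^3*Complex.I^3 + (1)*(↑r:ℂ)^3*(↑a:ℂ)^3*(↑b:ℂ)^4*(↑c:ℂ)*(↑s:ℂ)^2*Complex.I^2 + (1)*(↑r:ℂ)^3*(↑a:ℂ)^4*(↑b:ℂ)^3*(↑c:ℂ)^2*(↑s:ℂ)*Complex.I + (-1)*(↑r:ℂ)^3*(↑a:ℂ)^5*(↑b:ℂ)^2*(↑c:ℂ)^3 + (-1)*(↑r:ℂ)^3*(↑m:ℂ)*(↑a:ℂ)*(↑b:ℂ)^4*(↑s:ℂ)^3*Complex.I^3 + (1)*(↑r:ℂ)^3*(↑m:ℂ)*(↑a:ℂ)^2*(↑b:ℂ)^3*(↑c:ℂ)*(↑s:ℂ)^2*Complex.I^2 + (1)*(↑r:ℂ)^3*(↑m:ℂ)*(↑a:ℂ)^3*(↑b:ℂ)^2*(↑c:ℂ)^2*(↑s:ℂ)*Complex.I + (-1)*(↑r:ℂ)^3*(↑m:ℂ)*(↑a:ℂ)^4*(↑b:ℂ)*(↑c:ℂ)^3 + (-1)*(↑r:ℂ)^3*(↑m:ℂ)^2*(↑b:ℂ)^3*(↑s:ℂ)^3*Complex.I^3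 + (1)*(↑r:ℂ)^3*(↑m:ℂ)^2*(↑a:ℂ)*(↑b:ℂ)^2*(↑c:ℂ)*(↑s:ℂ)^2*Complex.I^2 + (1)*(↑r:ℂ)^3*(↑m:ℂ)^2*(↑a:ℂ)^2*(↑b:ℂ)*(↑c:ℂ)^2*(↑s:ℂ)*Complex.I + (-1)*(↑r:ℂ)^3*(↑m:ℂ)^2*(↑a:ℂ)^3*(↑c:ℂ)^3) * HM + ((1)*(↑r:ℂ)*(↑b:ℂ)*(↑c:ℂ)*(↑ω:ℂ)^2 + (-1)*(↑r:ℂ)*(↑b:ℂ)*(↑c:ℂ)*(↑ω:ℂ)^3 + (2)*(↑r:ℂ)*(↑b:ℂ)*(↑c:ℂ)*(↑s:ℂ)^2*(↑ω:ℂ) + (-2)*(↑r:ℂ)*(↑b:ℂ)*(↑c:ℂ)*(↑s:ℂ)^2*(↑ω:ℂ)^2 + (1)*(↑r:ℂ)*(↑b:ℂ)*(↑c:ℂ)*(↑s:ℂ)^4 + (-1)*(↑r:ℂ)*(↑b:ℂ)*(↑c:ℂ)*(↑s:ℂ)^4*(↑ω:ℂ) + (2)*(↑r:ℂ)*(↑b:ℂ)*(↑c:ℂ)^3*(↑ω:ℂ)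 + (-2)*(↑r:ℂ)*(↑b:ℂ)*(↑c:ℂ)^3*(↑ω:ℂ)^2 + (2)*(↑r:ℂ)*(↑b:ℂ)*(↑c:ℂ)^3*(↑s:ℂ)^2 + (-2)*(↑r:ℂ)*(↑b:ℂ)*(↑c:ℂ)^3*(↑s:ℂ)^2*(↑ω:ℂ) + (1)*(↑r:ℂ)*(↑b:ℂ)*(↑c:ℂ)^5 + (-1)*(↑r:ℂ)*(↑b:ℂ)*(↑c:ℂ)^5*(↑ω:ℂ) + (-1)*(↑r:ℂ)*(↑b:ℂ)^3*(↑c:ℂ)*(↑ω:ℂ)^2*Complex.I^2 + (2)*(↑r:ℂ)*(↑b:ℂ)^3*(↑c:ℂ)*(↑s:ℂ)^2*(↑ω:ℂ)*Complex.I^2 + (3)*(↑r:ℂ)*(↑b:ℂ)^3*(↑c:ℂ)*(↑s:ℂ)^4*Complex.I^2 + (-2)*(↑r:ℂ)*(↑b:ℂ)^3*(↑c:ℂ)^3*(↑ω:ℂ)*Complex.I^2 + (2)*(↑r:ℂ)*(↑b:ℂ)^3*(↑c:ℂ)^3*(↑s:ℂ)^2*Complex.I^2 + (-1)*(↑r:ℂ)*(↑b:ℂ)^3*(↑c:ℂ)^5*Complex.I^2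 + (1)*(↑r:ℂ)*(↑a:ℂ)*(↑b:ℂ)^2*(↑s:ℂ)*(↑ω:ℂ)^2*Complex.I + (2)*(↑r:ℂ)*(↑a:ℂ)*(↑b:ℂ)^2*(↑s:ℂ)^3*(↑ω:ℂ)*Complex.I + (1)*(↑r:ℂ)*(↑a:ℂ)*(↑b:ℂ)^2*(↑s:ℂ)^5*Complex.I + (-2)*(↑r:ℂ)*(↑a:ℂ)*(↑b:ℂ)^2*(↑c:ℂ)^2*(↑s:ℂ)*(↑ω:ℂ)*Complex.I + (-2)*(↑r:ℂ)*(↑a:ℂ)*(↑b:ℂ)^2*(↑c:ℂ)^2*(↑s:ℂ)^3*Complex.I + (-3)*(↑r:ℂ)*(↑a:ℂ)*(↑b:ℂ)^2*(↑c:ℂ)^4*(↑s:ℂ)*Complex.I + (-1)*(↑r:ℂ)^3*(↑b:ℂ)^3*(↑c:ℂ)^3 + (-2)*(↑r:ℂ)^3*(↑b:ℂ)^3*(↑c:ℂ)^3*(↑ω:ℂ) + (-1)*(↑r:ℂ)^3*(↑b:ℂ)^3*(↑c:ℂ)^3*(↑ω:ℂ)^2 + (1)*(↑r:ℂ)^3*(↑b:ℂ)^5*(↑c:ℂ)*(↑s:ℂ)^2*Complex.I^2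 + (1)*(↑r:ℂ)^3*(↑b:ℂ)^5*(↑c:ℂ)*(↑s:ℂ)^2*(↑ω:ℂ)*Complex.I^2 + (1)*(↑r:ℂ)^3*(↑a:ℂ)*(↑b:ℂ)^4*(↑c:ℂ)^2*(↑s:ℂ)*Complex.I + (1)*(↑r:ℂ)^3*(↑a:ℂ)*(↑b:ℂ)^4*(↑c:ℂ)^2*(↑s:ℂ)*(↑ω:ℂ)*Complex.I + (-1)*(↑r:ℂ)^3*(↑a:ℂ)*(↑b:ℂ)^6*(↑s:ℂ)^3*Complex.I^3 + (-1)*(↑r:ℂ)^3*(↑a:ℂ)^2*(↑b:ℂ)^3*(↑c:ℂ)^3 + (-1)*(↑r:ℂ)^3*(↑a:ℂ)^2*(↑b:ℂ)^3*(↑c:ℂ)^3*(↑ω:ℂ) + (1)*(↑r:ℂ)^3*(↑a:ℂ)^2*(↑b:ℂ)^5*(↑c:ℂ)*(↑s:ℂ)^2*Complex.I^2 + (1)*(↑r:ℂ)^3*(↑a:ℂ)^3*(↑b:ℂ)^4*(↑c:ℂ)^2*(↑s:ℂ)*Complex.I + (-1)*(↑r:ℂ)^3*(↑a:ℂ)^4*(↑b:ℂ)^3*(↑c:ℂ)^3)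 * HA + ((-1)*(↑r:ℂ)*(↑b:ℂ)*(↑c:ℂ)*(↑ω:ℂ)^2*Complex.I^2 + (-1)*(↑r:ℂ)*(↑b:ℂ)*(↑c:ℂ)*(↑ω:ℂ)^3*Complex.I^2 + (2)*(↑r:ℂ)*(↑b:ℂ)*(↑c:ℂ)*(↑s:ℂ)^2*(↑ω:ℂ)*Complex.I^2 + (2)*(↑r:ℂ)*(↑b:ℂ)*(↑c:ℂ)*(↑s:ℂ)^2*(↑ω:ℂ)^2*Complex.I^2 + (3)*(↑r:ℂ)*(↑b:ℂ)*(↑c:ℂ)*(↑s:ℂ)^4*Complex.I^2 + (3)*(↑r:ℂ)*(↑b:ℂ)*(↑c:ℂ)*(↑s:ℂ)^4*(↑ω:ℂ)*Complex.I^2 + (-2)*(↑r:ℂ)*(↑b:ℂ)*(↑c:ℂ)^3*(↑ω:ℂ)*Complex.I^2 + (-2)*(↑r:ℂ)*(↑b:ℂ)*(↑c:ℂ)^3*(↑ω:ℂ)^2*Complex.I^2 + (2)*(↑r:ℂ)*(↑b:ℂ)*(↑c:ℂ)^3*(↑s:ℂ)^2*Complex.I^2 + (2)*(↑r:ℂ)*(↑b:ℂ)*(↑c:ℂ)^3*(↑s:ℂ)^2*(↑ω:ℂ)*Complex.I^2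 + (-1)*(↑r:ℂ)*(↑b:ℂ)*(↑c:ℂ)^5*Complex.I^2 + (-1)*(↑r:ℂ)*(↑b:ℂ)*(↑c:ℂ)^5*(↑ω:ℂ)*Complex.I^2 + (2)*(↑r:ℂ)*(↑a:ℂ)*(↑s:ℂ)*(↑ω:ℂ)^2*Complex.I + (2)*(↑r:ℂ)*(↑a:ℂ)*(↑s:ℂ)*(↑ω:ℂ)^3*Complex.I + (4)*(↑r:ℂ)*(↑a:ℂ)*(↑s:ℂ)^3*(↑ω:ℂ)*Complex.I + (4)*(↑r:ℂ)*(↑a:ℂ)*(↑s:ℂ)^3*(↑ω:ℂ)^2*Complex.I + (2)*(↑r:ℂ)*(↑a:ℂ)*(↑s:ℂ)^5*Complex.I + (2)*(↑r:ℂ)*(↑a:ℂ)*(↑s:ℂ)^5*(↑ω:ℂ)*Complex.I + (-2)*(↑r:ℂ)*(↑a:ℂ)*(↑c:ℂ)^4*(↑s:ℂ)*Complex.I + (-2)*(↑r:ℂ)*(↑a:ℂ)*(↑c:ℂ)^4*(↑s:ℂ)*(↑ω:ℂ)*Complex.I + (1)*(↑r:ℂ)^3*(↑b:ℂ)*(↑c:ℂ)*(↑s:ℂ)^2*Complex.I^2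 + (1)*(↑r:ℂ)^3*(↑b:ℂ)*(↑c:ℂ)*(↑s:ℂ)^2*(↑ω:ℂ)*Complex.I^2 + (-1)*(↑r:ℂ)^3*(↑b:ℂ)*(↑c:ℂ)*(↑s:ℂ)^2*(↑ω:ℂ)^2*Complex.I^2 + (-1)*(↑r:ℂ)^3*(↑b:ℂ)*(↑c:ℂ)*(↑s:ℂ)^2*(↑ω:ℂ)^3*Complex.I^2 + (-1)*(↑r:ℂ)^3*(↑b:ℂ)*(↑c:ℂ)^3 + (-3)*(↑r:ℂ)^3*(↑b:ℂ)*(↑c:ℂ)^3*(↑ω:ℂ) + (-3)*(↑r:ℂ)^3*(↑b:ℂ)*(↑c:ℂ)^3*(↑ω:ℂ)^2 + (-1)*(↑r:ℂ)^3*(↑b:ℂ)*(↑c:ℂ)^3*(↑ω:ℂ)^3 + (1)*(↑r:ℂ)^3*(↑b:ℂ)^3*(↑c:ℂ)*(↑s:ℂ)^2*Complex.I^2 + (2)*(↑r:ℂ)^3*(↑b:ℂ)^3*(↑c:ℂ)*(↑s:ℂ)^2*(↑ω:ℂ)*Complex.I^2 + (1)*(↑r:ℂ)^3*(↑b:ℂ)^3*(↑c:ℂ)*(↑s:ℂ)^2*(↑ω:ℂ)^2*Complex.I^2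 + (-1)*(↑r:ℂ)^3*(↑a:ℂ)*(↑s:ℂ)^3*Complex.I^3 + (1)*(↑r:ℂ)^3*(↑a:ℂ)*(↑s:ℂ)^3*(↑ω:ℂ)*Complex.I^3 + (1)*(↑r:ℂ)^3*(↑a:ℂ)*(↑s:ℂ)^3*(↑ω:ℂ)^2*Complex.I^3 + (-1)*(↑r:ℂ)^3*(↑a:ℂ)*(↑s:ℂ)^3*(↑ω:ℂ)^3*Complex.I^3 + (1)*(↑r:ℂ)^3*(↑a:ℂ)*(↑c:ℂ)^2*(↑s:ℂ)*Complex.I + (1)*(↑r:ℂ)^3*(↑a:ℂ)*(↑c:ℂ)^2*(↑s:ℂ)*(↑ω:ℂ)*Complex.I + (-1)*(↑r:ℂ)^3*(↑a:ℂ)*(↑c:ℂ)^2*(↑s:ℂ)*(↑ω:ℂ)^2*Complex.I + (-1)*(↑r:ℂ)^3*(↑a:ℂ)*(↑c:ℂ)^2*(↑s:ℂ)*(↑ω:ℂ)^3*Complex.I + (-1)*(↑r:ℂ)^3*(↑a:ℂ)*(↑b:ℂ)^2*(↑s:ℂ)^3*Complex.I^3 + (1)*(↑r:ℂ)^3*(↑a:ℂ)*(↑b:ℂ)^2*(↑s:ℂ)^3*(↑ω:ℂ)^2*Complex.I^3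 + (1)*(↑r:ℂ)^3*(↑a:ℂ)*(↑b:ℂ)^2*(↑c:ℂ)^2*(↑s:ℂ)*Complex.I + (2)*(↑r:ℂ)^3*(↑a:ℂ)*(↑b:ℂ)^2*(↑c:ℂ)^2*(↑s:ℂ)*(↑ω:ℂ)*Complex.I + (1)*(↑r:ℂ)^3*(↑a:ℂ)*(↑b:ℂ)^2*(↑c:ℂ)^2*(↑s:ℂ)*(↑ω:ℂ)^2*Complex.I + (-1)*(↑r:ℂ)^3*(↑a:ℂ)*(↑b:ℂ)^4*(↑s:ℂ)^3*Complex.I^3 + (-1)*(↑r:ℂ)^3*(↑a:ℂ)*(↑b:ℂ)^4*(↑s:ℂ)^3*(↑ω:ℂ)*Complex.I^3) * HB + ((1)*(↑r:ℂ)*(↑b:ℂ)*(↑c:ℂ) + (-1)*(↑r:ℂ)*(↑b:ℂ)*(↑c:ℂ)*Complex.I^2 + (2)*(↑r:ℂ)*(↑b:ℂ)*(↑c:ℂ)*(↑ω:ℂ) + (-2)*(↑r:ℂ)*(↑b:ℂ)*(↑c:ℂ)*(↑ω:ℂ)*Complex.I^2 + (-1)*(↑r:ℂ)*(↑b:ℂ)*(↑c:ℂ)*(↑ω:ℂ)^2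 + (1)*(↑r:ℂ)*(↑b:ℂ)*(↑c:ℂ)*(↑ω:ℂ)^2*Complex.I^2 + (-2)*(↑r:ℂ)*(↑b:ℂ)*(↑c:ℂ)*(↑ω:ℂ)^3 + (2)*(↑r:ℂ)*(↑b:ℂ)*(↑c:ℂ)*(↑ω:ℂ)^3*Complex.I^2 + (3)*(↑r:ℂ)*(↑b:ℂ)*(↑c:ℂ)*(↑s:ℂ)^2 + (1)*(↑r:ℂ)*(↑b:ℂ)*(↑c:ℂ)*(↑s:ℂ)^2*Complex.I^2 + (-3)*(↑r:ℂ)*(↑b:ℂ)*(↑c:ℂ)*(↑s:ℂ)^2*(↑ω:ℂ)^2 + (-1)*(↑r:ℂ)*(↑b:ℂ)*(↑c:ℂ)*(↑s:ℂ)^2*(↑ω:ℂ)^2*Complex.I^2 + (1)*(↑r:ℂ)*(↑b:ℂ)*(↑c:ℂ)^3 + (-1)*(↑r:ℂ)*(↑b:ℂ)*(↑c:ℂ)^3*Complex.I^2 + (-1)*(↑r:ℂ)*(↑b:ℂ)*(↑c:ℂ)^3*(↑ω:ℂ)^2 + (1)*(↑r:ℂ)*(↑b:ℂ)*(↑c:ℂ)^3*(↑ω:ℂ)^2*Complex.I^2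 + (-2)*(↑r:ℂ)*(↑a:ℂ)*(↑s:ℂ)*Complex.I + (2)*(↑r:ℂ)*(↑a:ℂ)*(↑s:ℂ)*(↑ω:ℂ)^2*Complex.I + (-2)*(↑r:ℂ)*(↑a:ℂ)*(↑s:ℂ)^3*Complex.I + (2)*(↑r:ℂ)*(↑a:ℂ)*(↑s:ℂ)^3*(↑ω:ℂ)^2*Complex.I + (-2)*(↑r:ℂ)*(↑a:ℂ)*(↑c:ℂ)^2*(↑s:ℂ)*Complex.I + (2)*(↑r:ℂ)*(↑a:ℂ)*(↑c:ℂ)^2*(↑s:ℂ)*(↑ω:ℂ)^2*Complex.I + (-1)*(↑r:ℂ)^3*(↑b:ℂ)*(↑c:ℂ) + (-2)*(↑r:ℂ)^3*(↑b:ℂ)*(↑c:ℂ)*(↑ω:ℂ) + (2)*(↑r:ℂ)^3*(↑b:ℂ)*(↑c:ℂ)*(↑ω:ℂ)^3 + (1)*(↑r:ℂ)^3*(↑b:ℂ)*(↑c:ℂ)*(↑ω:ℂ)^4 + (1)*(↑r:ℂ)^3*(↑a:ℂ)*(↑s:ℂ)*Complex.I + (-2)*(↑r:ℂ)^3*(↑a:ℂ)*(↑s:ℂ)*(↑ω:ℂ)^2*Complex.I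 + (1)*(↑r:ℂ)^3*(↑a:ℂ)*(↑s:ℂ)*(↑ω:ℂ)^4*Complex.I) * HC + ((-1)*(↑r:ℂ)*(↑b:ℂ)*(↑c:ℂ) + (-2)*(↑r:ℂ)*(↑b:ℂ)*(↑c:ℂ)*(↑ω:ℂ) + (2)*(↑r:ℂ)*(↑b:ℂ)*(↑c:ℂ)*(↑ω:ℂ)^3 + (1)*(↑r:ℂ)*(↑b:ℂ)*(↑c:ℂ)*(↑ω:ℂ)^4 + (-1)*(↑r:ℂ)*(↑b:ℂ)*(↑c:ℂ)*(↑s:ℂ)^2 + (1)*(↑r:ℂ)*(↑b:ℂ)*(↑c:ℂ)*(↑s:ℂ)^2*Complex.I^2 + (-2)*(↑r:ℂ)*(↑b:ℂ)*(↑c:ℂ)*(↑s:ℂ)^2*(↑ω:ℂ) + (-2)*(↑r:ℂ)*(↑b:ℂ)*(↑c:ℂ)*(↑s:ℂ)^2*(↑ω:ℂ)^2*Complex.I^2 + (2)*(↑r:ℂ)*(↑b:ℂ)*(↑c:ℂ)*(↑s:ℂ)^2*(↑ω:ℂ)^3 + (1)*(↑r:ℂ)*(↑b:ℂ)*(↑c:ℂ)*(↑s:ℂ)^2*(↑ω:ℂ)^4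 + (1)*(↑r:ℂ)*(↑b:ℂ)*(↑c:ℂ)*(↑s:ℂ)^2*(↑ω:ℂ)^4*Complex.I^2 + (1)*(↑r:ℂ)*(↑a:ℂ)*(↑s:ℂ)*Complex.I + (-2)*(↑r:ℂ)*(↑a:ℂ)*(↑s:ℂ)*(↑ω:ℂ)^2*Complex.I + (1)*(↑r:ℂ)*(↑a:ℂ)*(↑s:ℂ)*(↑ω:ℂ)^4*Complex.I + (1)*(↑r:ℂ)*(↑a:ℂ)*(↑s:ℂ)^3*Complex.I + (-1)*(↑r:ℂ)*(↑a:ℂ)*(↑s:ℂ)^3*Complex.I^3 + (2)*(↑r:ℂ)*(↑a:ℂ)*(↑s:ℂ)^3*(↑ω:ℂ)*Complex.I^3 + (-2)*(↑r:ℂ)*(↑a:ℂ)*(↑s:ℂ)^3*(↑ω:ℂ)^2*Complex.I + (-2)*(↑r:ℂ)*(↑a:ℂ)*(↑s:ℂ)^3*(↑ω:ℂ)^3*Complex.I^3 + (1)*(↑r:ℂ)*(↑a:ℂ)*(↑s:ℂ)^3*(↑ω:ℂ)^4*Complex.I + (1)*(↑r:ℂ)*(↑a:ℂ)*(↑s:ℂ)^3*(↑ω:ℂ)^4*Complex.I^3)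 * HR + ((-1)*(↑r:ℂ)*(↑b:ℂ)*(↑c:ℂ) + (-2)*(↑r:ℂ)*(↑b:ℂ)*(↑c:ℂ)*(↑ω:ℂ) + (2)*(↑r:ℂ)*(↑b:ℂ)*(↑c:ℂ)*(↑ω:ℂ)^3 + (1)*(↑r:ℂ)*(↑b:ℂ)*(↑c:ℂ)*(↑ω:ℂ)^4 + (2)*(↑r:ℂ)*(↑b:ℂ)*(↑c:ℂ)*(↑s:ℂ)^2 + (-4)*(↑r:ℂ)*(↑b:ℂ)*(↑c:ℂ)*(↑s:ℂ)^2*(↑ω:ℂ)^2 + (2)*(↑r:ℂ)*(↑b:ℂ)*(↑c:ℂ)*(↑s:ℂ)^2*(↑ω:ℂ)^4 + (4)*(↑r:ℂ)*(↑b:ℂ)*(↑c:ℂ)*(↑s:ℂ)^4 + (-4)*(↑r:ℂ)*(↑b:ℂ)*(↑c:ℂ)*(↑s:ℂ)^4*(↑ω:ℂ)^2 + (-2)*(↑r:ℂ)*(↑a:ℂ)*(↑s:ℂ)^3*Complex.I + (4)*(↑r:ℂ)*(↑a:ℂ)*(↑s:ℂ)^3*(↑ω:ℂ)*Complex.I +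 (-4)*(↑r:ℂ)*(↑a:ℂ)*(↑s:ℂ)^3*(↑ω:ℂ)^3*Complex.I + (2)*(↑r:ℂ)*(↑a:ℂ)*(↑s:ℂ)^3*(↑ω:ℂ)^4*Complex.I) * Complex.I_sq
  have hODE : Complex.I * deriv (thirringSoliton ω) x - ↑ω * thirringSoliton ω x
      + (starRingEnd ℂ) (thirringSoliton ω x)
      = (thirringSoliton ω x)^2 * (starRingEnd ℂ) (thirringSoliton ω x) := by
    rw [hEval, hconjU, hUval]
    rw [eq_comm, ← sub_eq_zero]
    have key : ∀ D N0 N1 Nc : ℂ, D ≠ 0 →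
        Complex.I * N1 * D - ↑ω * N0 * D^2 + Nc * D^2 = N0^2 * Nc →
        (N0 / D)^2 * (Nc / D) - (Complex.I * (N1 / D^2) - ↑ω * (N0 / D) + Nc / D) = 0 := by
      intro D N0 N1 Nc hD h
      field_simp
      linear_combination (-1:ℂ) * h
    exact key _ _ _ _ hDC (by linear_combination poly)
  -- derivatives of W₁, W₂
  have hUd : HasDerivAt (thirringSoliton ω) (deriv (thirringSoliton ω) x) x := by
    rw [hderiv]; exact hU
  have hx0 : HasDerivAt (fun y : ℝ => (↑y : ℂ)) 1 x := by
    simpa using (hasDerivAt_id x).ofReal_comp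
  have hmul : HasDerivAt (fun y : ℝ => Complex.I * ↑ω * ↑y) (Complex.I * ↑ω) x := by
    simpa [mul_assoc] using hx0.const_mul (Complex.I * (↑ω : ℂ))
  have hW1 : HasDerivAt (W₁ ω)
      ((Complex.I * ↑ω) * thirringSoliton ω x
        + (Complex.I * ↑ω * ↑x) * deriv (thirringSoliton ω) x
        - (1/2 : ℂ) * deriv (thirringSoliton ω) x) x :=
    (hmul.mul hUd).sub (hUd.const_mul (1/2 : ℂ))
  have hVd : HasDerivAt (fun y => (starRingEnd ℂ) (thirringSoliton ω y))
      ((starRingEnd ℂ) (deriv (thirringSoliton ω) x)) x := by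
    simpa only [← starRingEnd_apply] using hUd.star
  have hW2 : HasDerivAt (W₂ ω)
      ((-(Complex.I * ↑ω)) * (starRingEnd ℂ) (thirringSoliton ω x)
        + (-(Complex.I * ↑ω * ↑x)) * (starRingEnd ℂ) (deriv (thirringSoliton ω) x)
        - (1/2 : ℂ) * (starRingEnd ℂ) (deriv (thirringSoliton ω) x)) x :=
    ((hmul.neg.mul hVd)).sub (hVd.const_mul (1/2 : ℂ))
  have hODE2 := congrArg (starRingEnd ℂ) hODE
  simp only [map_add, map_sub, map_mul, map_pow, Complex.conj_conj, Complex.conj_I,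
    Complex.conj_ofReal] at hODE2
  constructor
  · rw [hW1.deriv]
    simp only [W₁, W₂]
    linear_combination (-(Complex.I * (↑ω:ℂ) * ↑x) - 1/2) * hODE
      + (-(↑ω:ℂ) * thirringSoliton ω x) * Complex.I_sq
  · rw [hW2.deriv]
    simp only [W₁, W₂]
    linear_combination (Complex.I * (↑ω:ℂ) * ↑x - 1/2) * hODE2
      + (-(↑ω:ℂ) * (starRingEnd ℂ) (thirringSoliton ω x)) * Complex.I_sq
end
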